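/- arXiv:1502.05361 — 2 statements merged into one kernel-verified Lean document; each statement's English description precedes it below -/
import Mathlib

section
/- Let Q be a CSP instance and T a nice tree decomposition of its constraint graph. For every vector f satisfying the defining constraints of P(Q), define y_v^i = Σ_{K ∈ 𝒦(B) : K(v) = i} f(K) using any bag B containing v, and g(K) = Σ_{K' ∈ 𝒦(B) : K'↾_U = K} f(K') using any bag B with U ⊆ B, for each constraint C_U ∈ 𝒞 ∪ ℋ and K ∈ 𝒦(U). Then: (i) these values do not depend on the choice of the bag B; (ii) the resulting vector (y, g) satisfies the basic LP (1)–(3); and (iii) if f is integral then (y, g) is integral. In particular, (y, g) is the image of f under a linear map. -/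
/-! Common definitions: CSP instances, configurations, nice tree decompositions,
and the polytopes from Kolman–Koutecký. -/

/-- A constraint with scope `scope`; its satisfaction depends only on the
coordinates in the scope (it is a relation on the domains of the scope). -/
structure CSPConstraint (n : ℕ) where
  scope : Finset (Fin n)
  sat : (Fin n → ℝ) → Prop
  sat_congr : ∀ z z' : Fin n → ℝ, (∀ v ∈ scope, z v = z' v) → sat z → sat z'

/-- A CSP instance: finite real domains, hard constraints and soft constraints. -/
structure CSPInstance (n : ℕ) where
  dom : Fin n → Finset ℝ
  hard : List (CSPConstraint n)
  soft : List (CSPConstraint n)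

variable {n : ℕ}

/-- The list of all constraints (hard and soft). -/
def consList (Q : CSPInstance n) : List (CSPConstraint n) := Q.hard ++ Q.soft

/-- A feasible assignment: values in the domains, satisfying all hard constraints. -/
def Feasible (Q : CSPInstance n) (z : Fin n → ℝ) : Prop :=
  (∀ v, z v ∈ Q.dom v) ∧ ∀ C ∈ Q.hard, C.sat z

-- Configurations of a set `W` of variables: partial assignments (with `none`
-- playing the role of the symbol `λ`) defined exactly on `W`.
open Classical in
noncomputable def configs (Q : CSPInstance n) (W : Finset (Fin n)) :
    Finset (Fin n → Option ℝ) :=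
  (Fintype.piFinset fun v =>
      if v ∈ W then (Q.dom v).image some else ({none} : Finset (Option ℝ))).filter
    (fun K => ∀ C ∈ Q.hard, C.scope ⊆ W → C.sat (fun v => (K v).getD 0))

/-- Restriction `K↾_W` of a configuration: coordinates outside `W` are set to `λ`. -/
def restrictCfg (K : Fin n → Option ℝ) (W : Finset (Fin n)) : Fin n → Option ℝ :=
  fun v => if v ∈ W then K v else none

/-- A (rooted) nice tree: leaves, introduce nodes, forget nodes and join nodes. -/
inductive NiceTree (n : ℕ) : Type
  | leaf (v : Fin n) : NiceTree n
  | introduce (v : Fin n) (t : NiceTree n) : NiceTree n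
  | forget (v : Fin n) (t : NiceTree n) : NiceTree n
  | join (t₁ t₂ : NiceTree n) : NiceTree n

namespace NiceTree

/-- The bag of the root node of a nice tree. -/
def bag : NiceTree n → Finset (Fin n)
  | leaf v => {v}
  | introduce v t => insert v (bag t)
  | forget v t => (bag t).erase v
  | join t₁ _ => bag t₁

/-- All vertices appearing in bags of the tree. -/
def verts : NiceTree n → Finset (Fin n)
  | leaf v => {v}
  | introduce v t => insert v (verts t)
  | forget _ t => verts t
  | join t₁ t₂ => verts t₁ ∪ verts t₂

/-- Number of nodes of the tree. -/
def size : NiceTree n → ℕ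
  | leaf _ => 1
  | introduce _ t => size t + 1
  | forget _ t => size t + 1
  | join t₁ t₂ => size t₁ + size t₂ + 1

/-- Structural validity of a nice tree (in particular, the connectivity
condition of tree decompositions: an introduced vertex does not occur below,
and vertices shared by the two subtrees of a join lie in its bag). -/
def valid : NiceTree n → Prop
  | leaf _ => True
  | introduce v t => v ∉ verts t ∧ valid t
  | forget v t => v ∈ bag t ∧ valid t
  | join t₁ t₂ => bag t₁ = bag t₂ ∧ verts t₁ ∩ verts t₂ ⊆ bag t₁ ∧ valid t₁ ∧ valid t₂

/-- `isSubtree s t`: `s` is a node (subtree) of `t`. -/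
def isSubtree (s : NiceTree n) : NiceTree n → Prop
  | leaf v => s = leaf v
  | introduce v t => s = introduce v t ∨ isSubtree s t
  | forget v t => s = forget v t ∨ isSubtree s t
  | join t₁ t₂ => s = join t₁ t₂ ∨ isSubtree s t₁ ∨ isSubtree s t₂

-- The configurations relevant to the subtree: `ℛ(a) = ⋃_{b ∈ T(a)} 𝒦(B(b))`.
open Classical in
noncomputable def relConfigs (Q : CSPInstance n) : NiceTree n → Finset (Fin n → Option ℝ)
  | leaf v => configs Q {v}
  | introduce v t => configs Q (insert v (bag t)) ∪ relConfigs Q t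
  | forget v t => configs Q ((bag t).erase v) ∪ relConfigs Q t
  | join t₁ t₂ => relConfigs Q t₁ ∪ relConfigs Q t₂

end NiceTree

/-- A valid nice tree decomposition for the CSP instance `Q`: every variable is
in some bag and every constraint scope is contained in some bag. -/
def IsNiceTreeDecompCSP (Q : CSPInstance n) (T : NiceTree n) : Prop :=
  T.valid ∧ (∀ v : Fin n, v ∈ T.verts) ∧
    ∀ C ∈ consList Q, ∃ s : NiceTree n, s.isSubtree T ∧ C.scope ⊆ s.bag

/-- A valid nice tree decomposition of a graph `G`: every vertex is in some bag
and both endpoints of every edge lie in a common bag. -/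
def IsNiceTreeDecompGraph (G : SimpleGraph (Fin n)) (T : NiceTree n) : Prop :=
  T.valid ∧ (∀ v : Fin n, v ∈ T.verts) ∧
    ∀ u v : Fin n, G.Adj u v → ∃ s : NiceTree n, s.isSubtree T ∧ u ∈ s.bag ∧ v ∈ s.bag

/-- The constraint graph of a CSP instance. -/
def constraintGraph (Q : CSPInstance n) : SimpleGraph (Fin n) where
  Adj u v := u ≠ v ∧ ∃ C ∈ consList Q, u ∈ C.scope ∧ v ∈ C.scope
  symm := by
    constructor
    rintro u v ⟨hne, C, hC, hu, hv⟩
    exact ⟨hne.symm, C, hC, hv, hu⟩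
  loopless := by
    constructor
    rintro v ⟨hne, -⟩
    exact hne rfl

-- The LP constraints of `P(Q)` relevant to the subtree `t`: bag equations and
-- consistency equations at introduce and forget nodes of `t`.
def RelCons (Q : CSPInstance n) (f : (Fin n → Option ℝ) → ℝ) : NiceTree n → Prop
  | .leaf v => ∑ K ∈ configs Q {v}, f K = 1
  | .introduce v t =>
      RelCons Q f t ∧ (∑ K ∈ configs Q (insert v t.bag), f K = 1) ∧
      ∀ K ∈ configs Q t.bag,
        ∑ K' ∈ (configs Q (insert v t.bag)).filter
            (fun K' => restrictCfg K' t.bag = K), f K' = f K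
  | .forget v t =>
      RelCons Q f t ∧ (∑ K ∈ configs Q (t.bag.erase v), f K = 1) ∧
      ∀ K ∈ configs Q (t.bag.erase v),
        ∑ K' ∈ (configs Q t.bag).filter
            (fun K' => restrictCfg K' (t.bag.erase v) = K), f K' = f K
  | .join t₁ t₂ => RelCons Q f t₁ ∧ RelCons Q f t₂

/-- All the constraints of `P(Q)` relevant to the subtree `t`, including the
bounds `0 ≤ f(K) ≤ 1` for relevant configurations. -/
def RelevantLP (Q : CSPInstance n) (t : NiceTree n) (f : (Fin n → Option ℝ) → ℝ) : Prop :=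
  RelCons Q f t ∧ ∀ K ∈ t.relConfigs Q, 0 ≤ f K ∧ f K ≤ 1

/-- The polytope `P(Q) ⊆ ℝ^{𝒦_ℬ}` (coordinates outside `𝒦_ℬ` are zero). -/
def Ppoly (Q : CSPInstance n) (T : NiceTree n) : Set ((Fin n → Option ℝ) → ℝ) :=
  {f | RelevantLP Q T f ∧ ∀ K, K ∉ T.relConfigs Q → f K = 0}

/-- Extended feasible assignments `(z, h)`. -/
def ExtAssignments (Q : CSPInstance n) :
    Set ((Fin n → ℝ) × (Fin Q.soft.length → ℝ)) :=
  {p | Feasible Q p.1 ∧ ∀ i : Fin Q.soft.length,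
      ((Q.soft.get i).sat p.1 ∧ p.2 i = 1) ∨ (¬ (Q.soft.get i).sat p.1 ∧ p.2 i = 0)}

/-- `CSP(Q)`: the convex hull of all extended feasible assignments. -/
def CSPpolytope (Q : CSPInstance n) : Set ((Fin n → ℝ) × (Fin Q.soft.length → ℝ)) :=
  convexHull ℝ (ExtAssignments Q)

/-- `CSP'(Q)`: the convex hull of all feasible assignments. -/
def CSPpolytope' (Q : CSPInstance n) : Set (Fin n → ℝ) :=
  convexHull ℝ {z | Feasible Q z}

/-- The `y`-variables of the basic LP: one for each `v ∈ V` and `i ∈ D_v`. -/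
abbrev YType (Q : CSPInstance n) := (v : Fin n) → {i : ℝ // i ∈ Q.dom v} → ℝ

/-- The `g`-variables of the basic LP: one for each constraint `C_U ∈ 𝒞 ∪ ℋ`
and each configuration `K ∈ 𝒦(U)`. -/
abbrev GType (Q : CSPInstance n) :=
  (c : Fin (consList Q).length) →
    {K : Fin n → Option ℝ // K ∈ configs Q ((consList Q).get c).scope} → ℝ

/-- The basic LP (1)–(3). -/
def BasicLP (Q : CSPInstance n) (p : YType Q × GType Q) : Prop :=
  (∀ v : Fin n, ∑ i ∈ (Q.dom v).attach, p.1 v i = 1) ∧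
  (∀ c : Fin (consList Q).length, ∀ v ∈ ((consList Q).get c).scope,
    ∀ (i : ℝ) (hi : i ∈ Q.dom v),
      ∑ K ∈ (configs Q ((consList Q).get c).scope).attach.filter
          (fun K => K.1 v = some i), p.2 c K = p.1 v ⟨i, hi⟩) ∧
  (∀ v i, 0 ≤ p.1 v i ∧ p.1 v i ≤ 1) ∧ (∀ c K, 0 ≤ p.2 c K ∧ p.2 c K ≤ 1)

/-- Integrality (all coordinates in `{0,1}`) of a `(y, g)` vector. -/
def IntegralYG (Q : CSPInstance n) (p : YType Q × GType Q) : Prop :=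
  (∀ v i, p.1 v i = 0 ∨ p.1 v i = 1) ∧ ∀ c K, p.2 c K = 0 ∨ p.2 c K = 1

-- The map sending a (feasible) assignment `z` to the `(y, g)` vector of the basic LP.
open Classical in
noncomputable def exMap (Q : CSPInstance n) (z : Fin n → ℝ) : YType Q × GType Q :=
  (fun v i => if z v = i.1 then 1 else 0,
   fun c K => if ∀ u ∈ ((consList Q).get c).scope, K.1 u = some (z u) then 1 else 0)

section Aux

open Finset NiceTree

variable {Q : CSPInstance n} {f : (Fin n → Option ℝ) → ℝ}

lemma restrict_restrict {W W' : Finset (Fin n)} (h : W ⊆ W') (K : Fin n → Option ℝ) :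
    restrictCfg (restrictCfg K W') W = restrictCfg K W := by
  funext v
  by_cases hv : v ∈ W
  · simp [restrictCfg, hv, h hv]
  · simp [restrictCfg, hv]

lemma restrict_apply_mem {W : Finset (Fin n)} {v : Fin n} (hv : v ∈ W) (K : Fin n → Option ℝ) :
    restrictCfg K W v = K v := by simp [restrictCfg, hv]

lemma configs_val_mem {W : Finset (Fin n)} {K : Fin n → Option ℝ} {v : Fin n}
    (hK : K ∈ configs Q W) (hv : v ∈ W) : K v ∈ (Q.dom v).image some := by
  classical
  simp only [configs, Finset.mem_filter, Fintype.mem_piFinset] at hK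
  have := hK.1 v
  rwa [if_pos hv] at this

lemma configs_val_none {W : Finset (Fin n)} {K : Fin n → Option ℝ} {v : Fin n}
    (hK : K ∈ configs Q W) (hv : v ∉ W) : K v = none := by
  classical
  simp only [configs, Finset.mem_filter, Fintype.mem_piFinset] at hK
  have := hK.1 v
  rw [if_neg hv] at this
  simpa using this

lemma configs_sat {W : Finset (Fin n)} {K : Fin n → Option ℝ} {C : CSPConstraint n}
    (hK : K ∈ configs Q W) (hC : C ∈ Q.hard) (hsub : C.scope ⊆ W) :
    C.sat (fun v => (K v).getD 0) := by
  classical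
  simp only [configs, Finset.mem_filter] at hK
  exact hK.2 C hC hsub

lemma mem_configs {W : Finset (Fin n)} {K : Fin n → Option ℝ}
    (h1 : ∀ v ∈ W, K v ∈ (Q.dom v).image some) (h2 : ∀ v ∉ W, K v = none)
    (h3 : ∀ C ∈ Q.hard, C.scope ⊆ W → C.sat (fun v => (K v).getD 0)) :
    K ∈ configs Q W := by
  classical
  simp only [configs, Finset.mem_filter, Fintype.mem_piFinset]
  refine ⟨fun v => ?_, h3⟩
  by_cases hv : v ∈ W
  · rw [if_pos hv]; exact h1 v hv
  · rw [if_neg hv]; simp [h2 v hv]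

lemma config_val {W : Finset (Fin n)} {K : Fin n → Option ℝ} {v : Fin n}
    (hK : K ∈ configs Q W) (hv : v ∈ W) : ∃ x ∈ Q.dom v, K v = some x := by
  obtain ⟨x, hx, hxy⟩ := Finset.mem_image.mp (configs_val_mem hK hv)
  exact ⟨x, hx, hxy.symm⟩

lemma restrict_mem_configs {W W' : Finset (Fin n)} (h : W ⊆ W') {K : Fin n → Option ℝ}
    (hK : K ∈ configs Q W') : restrictCfg K W ∈ configs Q W := by
  refine mem_configs (fun v hv => ?_) (fun v hv => ?_) (fun C hC hsub => ?_)
  · rw [restrict_apply_mem hv]; exact configs_val_mem hK (h hv)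
  · simp [restrictCfg, hv]
  · refine C.sat_congr _ _ (fun v hv => ?_) (configs_sat hK hC (hsub.trans h))
    rw [restrict_apply_mem (hsub hv)]
lemma isSubtree_self : ∀ t : NiceTree n, t.isSubtree t
  | .leaf v => rfl
  | .introduce v t => Or.inl rfl
  | .forget v t => Or.inl rfl
  | .join t₁ t₂ => Or.inl rfl

lemma bag_subset_verts : ∀ t : NiceTree n, t.bag ⊆ t.verts
  | .leaf v => Finset.Subset.refl _
  | .introduce v t => Finset.insert_subset_insert v (bag_subset_verts t)
  | .forget v t => (Finset.erase_subset v t.bag).trans (bag_subset_verts t)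
  | .join t₁ t₂ => (bag_subset_verts t₁).trans Finset.subset_union_left

lemma verts_subset_of_isSubtree {s : NiceTree n} :
    ∀ t : NiceTree n, s.isSubtree t → s.verts ⊆ t.verts := by
  intro t
  induction t with
  | leaf v => rintro rfl; exact Finset.Subset.refl _
  | introduce v t ih =>
    rintro (rfl | h)
    · exact Finset.Subset.refl _
    · exact (ih h).trans (Finset.subset_insert _ _)
  | forget v t ih =>
    rintro (rfl | h)
    · exact Finset.Subset.refl _
    · exact ih h
  | join t₁ t₂ ih₁ ih₂ =>
    rintro (rfl | h | h)
    · exact Finset.Subset.refl _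
    · exact (ih₁ h).trans Finset.subset_union_left
    · exact (ih₂ h).trans Finset.subset_union_right

lemma relCons_of_isSubtree {s : NiceTree n} :
    ∀ t : NiceTree n, s.isSubtree t → RelCons Q f t → RelCons Q f s := by
  intro t
  induction t with
  | leaf v => rintro rfl h; exact h
  | introduce v t ih => rintro (rfl | h) hr; exacts [hr, ih h hr.1]
  | forget v t ih => rintro (rfl | h) hr; exacts [hr, ih h hr.1]
  | join t₁ t₂ ih₁ ih₂ =>
    rintro (rfl | h | h) hr; exacts [hr, ih₁ h hr.1, ih₂ h hr.2]

lemma sum_bag_one : ∀ t : NiceTree n, RelCons Q f t → ∑ K ∈ configs Q t.bag, f K = 1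
  | .leaf v, h => h
  | .introduce v t, h => h.2.1
  | .forget v t, h => h.2.1
  | .join t₁ t₂, h => sum_bag_one t₁ h.1

lemma configs_bag_subset_relConfigs :
    ∀ t s : NiceTree n, s.isSubtree t → configs Q s.bag ⊆ t.relConfigs Q := by
  intro t
  induction t with
  | leaf v => rintro s rfl; exact Finset.Subset.refl _
  | introduce v t ih =>
    rintro s (rfl | h)
    · exact Finset.subset_union_left
    · exact (ih s h).trans Finset.subset_union_right
  | forget v t ih =>
    rintro s (rfl | h)
    · exact Finset.subset_union_left
    · exact (ih s h).trans Finset.subset_union_right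
  | join t₁ t₂ ih₁ ih₂ =>
    rintro s (rfl | h | h)
    · exact (ih₁ t₁ (isSubtree_self t₁)).trans Finset.subset_union_left
    · exact (ih₁ s h).trans Finset.subset_union_left
    · exact (ih₂ s h).trans Finset.subset_union_right

lemma exists_bag_of_mem_verts {v : Fin n} :
    ∀ t : NiceTree n, v ∈ t.verts → ∃ s : NiceTree n, s.isSubtree t ∧ v ∈ s.bag := by
  intro t
  induction t with
  | leaf w => intro h; exact ⟨.leaf w, rfl, h⟩
  | introduce w t ih =>
    intro h
    rcases Finset.mem_insert.mp h with rfl | h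
    · exact ⟨.introduce v t, Or.inl rfl, Finset.mem_insert_self _ _⟩
    · obtain ⟨s, hs, hb⟩ := ih h
      exact ⟨s, Or.inr hs, hb⟩
  | forget w t ih =>
    intro h
    obtain ⟨s, hs, hb⟩ := ih h
    exact ⟨s, Or.inr hs, hb⟩
  | join t₁ t₂ ih₁ ih₂ =>
    intro h
    rcases Finset.mem_union.mp h with h | h
    · obtain ⟨s, hs, hb⟩ := ih₁ h
      exact ⟨s, Or.inr (Or.inl hs), hb⟩
    · obtain ⟨s, hs, hb⟩ := ih₂ h
      exact ⟨s, Or.inr (Or.inr hs), hb⟩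
lemma fiber_split {W W' : Finset (Fin n)} (hWW : W ⊆ W')
    (P : (Fin n → Option ℝ) → Prop) [DecidablePred P]
    (hP : ∀ K, P (restrictCfg K W) ↔ P K) :
    ∑ K ∈ (configs Q W').filter P, f K
      = ∑ K₀ ∈ (configs Q W).filter P,
          ∑ K ∈ (configs Q W').filter (fun K => restrictCfg K W = K₀), f K := by
  classical
  have hmaps : ∀ K ∈ (configs Q W').filter P,
      restrictCfg K W ∈ (configs Q W).filter P := by
    intro K hK
    rw [Finset.mem_filter] at hK ⊢
    exact ⟨restrict_mem_configs hWW hK.1, (hP K).mpr hK.2⟩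
  rw [← Finset.sum_fiberwise_of_maps_to hmaps f]
  refine Finset.sum_congr rfl (fun K₀ hK₀ => ?_)
  rw [Finset.mem_filter] at hK₀
  refine Finset.sum_congr ?_ (fun _ _ => rfl)
  ext K
  simp only [Finset.mem_filter]
  constructor
  · rintro ⟨⟨h1, -⟩, h3⟩; exact ⟨h1, h3⟩
  · rintro ⟨h1, h3⟩; exact ⟨⟨h1, (hP K).mp (h3 ▸ hK₀.2)⟩, h3⟩

lemma fiber_sum {W W' : Finset (Fin n)} (hWW : W ⊆ W')
    (P : (Fin n → Option ℝ) → Prop) [DecidablePred P]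
    (hP : ∀ K, P (restrictCfg K W) ↔ P K)
    (hcons : ∀ K₀ ∈ configs Q W,
      ∑ K ∈ (configs Q W').filter (fun K => restrictCfg K W = K₀), f K = f K₀) :
    ∑ K ∈ (configs Q W').filter P, f K = ∑ K ∈ (configs Q W).filter P, f K := by
  rw [fiber_split hWW P hP]
  exact Finset.sum_congr rfl fun K₀ hK₀ => hcons K₀ (Finset.mem_filter.mp hK₀).1

lemma marg_indep (U : Finset (Fin n)) (P : (Fin n → Option ℝ) → Prop) [DecidablePred P]
    (hP : ∀ (K : Fin n → Option ℝ) (W : Finset (Fin n)), U ⊆ W →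
      (P (restrictCfg K W) ↔ P K)) :
    ∀ t : NiceTree n, t.valid → RelCons Q f t →
      ∀ s s' : NiceTree n, s.isSubtree t → s'.isSubtree t → U ⊆ s.bag → U ⊆ s'.bag →
      ∑ K ∈ (configs Q s.bag).filter P, f K = ∑ K ∈ (configs Q s'.bag).filter P, f K := by
  intro t
  induction t with
  | leaf v =>
    rintro _ _ s s' rfl rfl _ _
    rfl
  | introduce w t ih =>
    rintro ⟨hw, hval⟩ ⟨hrct, -, hcons⟩ s s' hs hs' hUs hUs'
    -- from a subtree of `t`, `U` avoids `w`
    have hUbag : ∀ u : NiceTree n, u.isSubtree t → U ⊆ u.bag →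
        U ⊆ insert w t.bag → U ⊆ t.bag := by
      intro u hu hUu hUins
      intro x hx
      have hxv : x ∈ t.verts :=
        verts_subset_of_isSubtree t hu (bag_subset_verts u (hUu hx))
      have hxw : x ≠ w := fun h => hw (h ▸ hxv)
      rcases Finset.mem_insert.mp (hUins hx) with h | h
      · exact absurd h hxw
      · exact h
    have key : U ⊆ t.bag →
        ∑ K ∈ (configs Q (insert w t.bag)).filter P, f K
          = ∑ K ∈ (configs Q t.bag).filter P, f K := fun hUt =>
      fiber_sum (Finset.subset_insert w t.bag) P (fun K => hP K t.bag hUt) hcons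
    rcases hs with rfl | hs
    · rcases hs' with rfl | hs'
      · rfl
      · have hUt : U ⊆ t.bag := hUbag s' hs' hUs' hUs
        calc ∑ K ∈ (configs Q (NiceTree.introduce w t).bag).filter P, f K
            = ∑ K ∈ (configs Q t.bag).filter P, f K := key hUt
          _ = ∑ K ∈ (configs Q s'.bag).filter P, f K :=
              ih hval hrct t s' (isSubtree_self t) hs' hUt hUs'
    · rcases hs' with rfl | hs'
      · have hUt : U ⊆ t.bag := hUbag s hs hUs hUs'
        calc ∑ K ∈ (configs Q s.bag).filter P, f K
            = ∑ K ∈ (configs Q t.bag).filter P, f K :=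
              ih hval hrct s t hs (isSubtree_self t) hUs hUt
          _ = ∑ K ∈ (configs Q (NiceTree.introduce w t).bag).filter P, f K :=
              (key hUt).symm
      · exact ih hval hrct s s' hs hs' hUs hUs'
  | forget w t ih =>
    rintro ⟨hwmem, hval⟩ ⟨hrct, -, hcons⟩ s s' hs hs' hUs hUs'
    have key : U ⊆ t.bag.erase w →
        ∑ K ∈ (configs Q (t.bag.erase w)).filter P, f K
          = ∑ K ∈ (configs Q t.bag).filter P, f K := fun hUe =>
      (fiber_sum (Finset.erase_subset w t.bag) P (fun K => hP K _ hUe) hcons).symm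
    rcases hs with rfl | hs
    · rcases hs' with rfl | hs'
      · rfl
      · have hUt : U ⊆ t.bag := hUs.trans (Finset.erase_subset w t.bag)
        calc ∑ K ∈ (configs Q (NiceTree.forget w t).bag).filter P, f K
            = ∑ K ∈ (configs Q t.bag).filter P, f K := key hUs
          _ = ∑ K ∈ (configs Q s'.bag).filter P, f K :=
              ih hval hrct t s' (isSubtree_self t) hs' hUt hUs'
    · rcases hs' with rfl | hs'
      · have hUt : U ⊆ t.bag := hUs'.trans (Finset.erase_subset w t.bag)
        calc ∑ K ∈ (configs Q s.bag).filter P, f K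
            = ∑ K ∈ (configs Q t.bag).filter P, f K :=
              ih hval hrct s t hs (isSubtree_self t) hUs hUt
          _ = ∑ K ∈ (configs Q (NiceTree.forget w t).bag).filter P, f K :=
              (key hUs').symm
      · exact ih hval hrct s s' hs hs' hUs hUs'
  | join t₁ t₂ ih₁ ih₂ =>
    rintro ⟨hbag, hint, hv₁, hv₂⟩ ⟨hr₁, hr₂⟩ s s' hs hs' hUs hUs'
    have cross : ∀ u u' : NiceTree n, u.isSubtree t₁ → u'.isSubtree t₂ →
        U ⊆ u.bag → U ⊆ u'.bag →
        ∑ K ∈ (configs Q u.bag).filter P, f K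
          = ∑ K ∈ (configs Q u'.bag).filter P, f K := by
      intro u u' hu hu' hUu hUu'
      have hUb₁ : U ⊆ t₁.bag := by
        intro x hx
        refine hint (Finset.mem_inter.mpr ⟨?_, ?_⟩)
        · exact verts_subset_of_isSubtree t₁ hu (bag_subset_verts u (hUu hx))
        · exact verts_subset_of_isSubtree t₂ hu' (bag_subset_verts u' (hUu' hx))
      have hUb₂ : U ⊆ t₂.bag := hbag ▸ hUb₁
      calc ∑ K ∈ (configs Q u.bag).filter P, f K
          = ∑ K ∈ (configs Q t₁.bag).filter P, f K :=
            ih₁ hv₁ hr₁ u t₁ hu (isSubtree_self t₁) hUu hUb₁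
        _ = ∑ K ∈ (configs Q t₂.bag).filter P, f K := by rw [hbag]
        _ = ∑ K ∈ (configs Q u'.bag).filter P, f K :=
            ih₂ hv₂ hr₂ t₂ u' (isSubtree_self t₂) hu' hUb₂ hUu'
    rcases hs with rfl | hs | hs
    · rcases hs' with rfl | hs' | hs'
      · rfl
      · exact ih₁ hv₁ hr₁ t₁ s' (isSubtree_self t₁) hs' hUs hUs'
      · have hUb₂ : U ⊆ t₂.bag := hbag ▸ (hUs : U ⊆ t₁.bag)
        calc ∑ K ∈ (configs Q (NiceTree.join t₁ t₂).bag).filter P, f K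
            = ∑ K ∈ (configs Q t₂.bag).filter P, f K := by
              show ∑ K ∈ (configs Q t₁.bag).filter P, f K = _
              rw [hbag]
          _ = ∑ K ∈ (configs Q s'.bag).filter P, f K :=
            ih₂ hv₂ hr₂ t₂ s' (isSubtree_self t₂) hs' hUb₂ hUs'
    · rcases hs' with rfl | hs' | hs'
      · exact ih₁ hv₁ hr₁ s t₁ hs (isSubtree_self t₁) hUs hUs'
      · exact ih₁ hv₁ hr₁ s s' hs hs' hUs hUs'
      · exact cross s s' hs hs' hUs hUs'
    · rcases hs' with rfl | hs' | hs'
      · have hUb₂ : U ⊆ t₂.bag := hbag ▸ (hUs' : U ⊆ t₁.bag)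
        calc ∑ K ∈ (configs Q s.bag).filter P, f K
            = ∑ K ∈ (configs Q t₂.bag).filter P, f K :=
              ih₂ hv₂ hr₂ s t₂ hs (isSubtree_self t₂) hUs hUb₂
          _ = ∑ K ∈ (configs Q (NiceTree.join t₁ t₂).bag).filter P, f K := by
              show _ = ∑ K ∈ (configs Q t₁.bag).filter P, f K
              rw [hbag]
      · exact (cross s' s hs' hs hUs' hUs).symm
      · exact ih₂ hv₂ hr₂ s s' hs hs' hUs hUs'
lemma sum01 {α : Type*} (s : Finset α) (g : α → ℝ) (h01 : ∀ x ∈ s, g x = 0 ∨ g x = 1)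
    (hle : ∑ x ∈ s, g x ≤ 1) : (∑ x ∈ s, g x) = 0 ∨ (∑ x ∈ s, g x) = 1 := by
  by_cases hall : ∀ x ∈ s, g x = 0
  · exact Or.inl (Finset.sum_eq_zero hall)
  · push_neg at hall
    obtain ⟨x, hx, hne⟩ := hall
    have hx1 : g x = 1 := (h01 x hx).resolve_left hne
    have h1 : (1 : ℝ) ≤ ∑ y ∈ s, g y := by
      rw [← hx1]
      exact Finset.single_le_sum (fun y hy => by rcases h01 y hy with h | h <;> simp [h]) hx
    exact Or.inr (le_antisymm hle h1)

lemma y_partition {B : Finset (Fin n)} {v : Fin n} (hvB : v ∈ B) :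
    ∑ i ∈ (Q.dom v).attach, ∑ K ∈ (configs Q B).filter (fun K => K v = some i.1), f K
      = ∑ K ∈ configs Q B, f K := by
  classical
  simp only [Finset.sum_filter]
  rw [Finset.sum_comm]
  refine Finset.sum_congr rfl fun K hK => ?_
  obtain ⟨x, hx, hKv⟩ := config_val hK hvB
  rw [Finset.sum_eq_single (⟨x, hx⟩ : {i // i ∈ Q.dom v})]
  · rw [if_pos hKv]
  · intro i _ hne
    rw [if_neg]
    intro h
    apply hne
    apply Subtype.ext
    rw [hKv] at h
    exact (Option.some_injective ℝ h).symm
  · intro h; exact absurd (Finset.mem_attach _ _) h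

end Aux

/-- The projection from `P(Q)` to the basic LP: the values
`y_v^i` and `g(K)` obtained by summing `f` over configurations of a bag are
independent of the chosen bag, satisfy the basic LP, are integral whenever `f`
is, and are the image of `f` under a linear map. -/
theorem ppoly_projects_to_basicLP (n : ℕ) (Q : CSPInstance n) (T : NiceTree n)
    (hT : IsNiceTreeDecompCSP Q T) :
    (∀ f ∈ Ppoly Q T,
      -- (i) independence of the chosen bag, for the `y`-values
      (∀ (v : Fin n) (i : ℝ) (s s' : NiceTree n),
        s.isSubtree T → s'.isSubtree T → v ∈ s.bag → v ∈ s'.bag →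
        ∑ K ∈ (configs Q s.bag).filter (fun K => K v = some i), f K
          = ∑ K ∈ (configs Q s'.bag).filter (fun K => K v = some i), f K) ∧
      -- (i) independence of the chosen bag, for the `g`-values
      (∀ C ∈ consList Q, ∀ K₀ ∈ configs Q C.scope, ∀ s s' : NiceTree n,
        s.isSubtree T → s'.isSubtree T → C.scope ⊆ s.bag → C.scope ⊆ s'.bag →
        ∑ K ∈ (configs Q s.bag).filter (fun K => restrictCfg K C.scope = K₀), f K
          = ∑ K ∈ (configs Q s'.bag).filter (fun K => restrictCfg K C.scope = K₀), f K) ∧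
      -- (ii) and (iii)
      (∀ p : YType Q × GType Q,
        (∀ (v : Fin n) (i : {i : ℝ // i ∈ Q.dom v}) (s : NiceTree n),
          s.isSubtree T → v ∈ s.bag →
          p.1 v i = ∑ K ∈ (configs Q s.bag).filter (fun K => K v = some i.1), f K) →
        (∀ (c : Fin (consList Q).length)
          (K₀ : {K : Fin n → Option ℝ // K ∈ configs Q ((consList Q).get c).scope})
          (s : NiceTree n), s.isSubtree T → ((consList Q).get c).scope ⊆ s.bag →
          p.2 c K₀ = ∑ K ∈ (configs Q s.bag).filter
              (fun K => restrictCfg K ((consList Q).get c).scope = K₀.1), f K) →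
        BasicLP Q p ∧ ((∀ K, f K = 0 ∨ f K = 1) → IntegralYG Q p))) ∧
    -- in particular, `(y, g)` is the image of `f` under a linear map
    ∃ π : ((Fin n → Option ℝ) → ℝ) →ₗ[ℝ] (YType Q × GType Q),
      ∀ f ∈ Ppoly Q T, ∀ p : YType Q × GType Q,
        (∀ (v : Fin n) (i : {i : ℝ // i ∈ Q.dom v}) (s : NiceTree n),
          s.isSubtree T → v ∈ s.bag →
          p.1 v i = ∑ K ∈ (configs Q s.bag).filter (fun K => K v = some i.1), f K) →
        (∀ (c : Fin (consList Q).length)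
          (K₀ : {K : Fin n → Option ℝ // K ∈ configs Q ((consList Q).get c).scope})
          (s : NiceTree n), s.isSubtree T → ((consList Q).get c).scope ⊆ s.bag →
          p.2 c K₀ = ∑ K ∈ (configs Q s.bag).filter
              (fun K => restrictCfg K ((consList Q).get c).scope = K₀.1), f K) →
        π f = p := by


  classical
  obtain ⟨hval, hverts, hscope⟩ := hT
  have hgetmem : ∀ c : Fin (consList Q).length, (consList Q).get c ∈ consList Q :=
    fun c => List.get_mem _ c
  constructor
  · intro f hf
    obtain ⟨⟨hrc, hbnd⟩, hout⟩ := hf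
    refine ⟨?_, ?_, ?_⟩
    · intro v i s s' hs hs' hv hv'
      exact marg_indep {v} (fun K => K v = some i)
        (fun K W hW => by
          simp only [restrict_apply_mem (hW (Finset.mem_singleton_self v))])
        T hval hrc s s' hs hs'
        (Finset.singleton_subset_iff.mpr hv) (Finset.singleton_subset_iff.mpr hv')
    · intro C hC K₀ hK₀ s s' hs hs' hsub hsub'
      exact marg_indep C.scope (fun K => restrictCfg K C.scope = K₀)
        (fun K W hW => by simp only [restrict_restrict hW]) T hval hrc s s' hs hs' hsub hsub'
    · intro p hy hg
      have hsum1 : ∀ s : NiceTree n, s.isSubtree T → ∑ K ∈ configs Q s.bag, f K = 1 :=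
        fun s hs => sum_bag_one s (relCons_of_isSubtree T hs hrc)
      have hnn : ∀ s : NiceTree n, s.isSubtree T → ∀ K ∈ configs Q s.bag, 0 ≤ f K :=
        fun s hs K hK => (hbnd K (configs_bag_subset_relConfigs T s hs hK)).1
      have hfs : ∀ (s : NiceTree n), s.isSubtree T →
          ∀ (P : (Fin n → Option ℝ) → Prop) (_ : DecidablePred P),
          0 ≤ ∑ K ∈ (configs Q s.bag).filter P, f K ∧
            ∑ K ∈ (configs Q s.bag).filter P, f K ≤ 1 := by
        intro s hs P _
        constructor
        · exact Finset.sum_nonneg fun K hK => hnn s hs K (Finset.mem_filter.mp hK).1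
        · calc ∑ K ∈ (configs Q s.bag).filter P, f K
              ≤ ∑ K ∈ configs Q s.bag, f K :=
                Finset.sum_le_sum_of_subset_of_nonneg (Finset.filter_subset _ _)
                  (fun K hK _ => hnn s hs K hK)
            _ = 1 := hsum1 s hs
      have hbag : ∀ v : Fin n, ∃ s : NiceTree n, s.isSubtree T ∧ v ∈ s.bag :=
        fun v => exists_bag_of_mem_verts T (hverts v)
      have hBasic : BasicLP Q p := by
        refine ⟨?_, ?_, ?_, ?_⟩
        · intro v
          obtain ⟨s, hs, hvB⟩ := hbag v
          calc ∑ i ∈ (Q.dom v).attach, p.1 v i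
              = ∑ i ∈ (Q.dom v).attach,
                  ∑ K ∈ (configs Q s.bag).filter (fun K => K v = some i.1), f K :=
                Finset.sum_congr rfl fun i _ => hy v i s hs hvB
            _ = ∑ K ∈ configs Q s.bag, f K := y_partition hvB
            _ = 1 := hsum1 s hs
        · intro c v hvU i hi
          obtain ⟨s, hs, hsub⟩ := hscope _ (hgetmem c)
          calc ∑ K₀ ∈ (configs Q ((consList Q).get c).scope).attach.filter
                  (fun K => K.1 v = some i), p.2 c K₀
              = ∑ K₀ ∈ (configs Q ((consList Q).get c).scope).attach.filter
                  (fun K => K.1 v = some i),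
                  ∑ K ∈ (configs Q s.bag).filter
                    (fun K => restrictCfg K ((consList Q).get c).scope = K₀.1), f K :=
                Finset.sum_congr rfl fun K₀ _ => hg c K₀ s hs hsub
            _ = ∑ K₀ ∈ (configs Q ((consList Q).get c).scope).filter
                  (fun K => K v = some i),
                  ∑ K ∈ (configs Q s.bag).filter
                    (fun K => restrictCfg K ((consList Q).get c).scope = K₀), f K := by
                rw [Finset.sum_filter, Finset.sum_filter]
                exact Finset.sum_attach _ (fun b => if b v = some i then
                  ∑ K ∈ (configs Q s.bag).filter
                    (fun K => restrictCfg K ((consList Q).get c).scope = b), f K else 0)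
            _ = ∑ K ∈ (configs Q s.bag).filter (fun K => K v = some i), f K :=
                (fiber_split hsub (fun K => K v = some i)
                  (fun K => by simp only [restrict_apply_mem hvU])).symm
            _ = p.1 v ⟨i, hi⟩ := (hy v ⟨i, hi⟩ s hs (hsub hvU)).symm
        · intro v i
          obtain ⟨s, hs, hvB⟩ := hbag v
          rw [hy v i s hs hvB]
          exact hfs s hs _ _
        · intro c K₀
          obtain ⟨s, hs, hsub⟩ := hscope _ (hgetmem c)
          rw [hg c K₀ s hs hsub]
          exact hfs s hs _ _
      refine ⟨hBasic, fun hint => ⟨?_, ?_⟩⟩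
      · intro v i
        obtain ⟨s, hs, hvB⟩ := hbag v
        rw [hy v i s hs hvB]
        refine sum01 _ _ (fun K _ => hint K) ?_
        rw [← hy v i s hs hvB]
        exact (hBasic.2.2.1 v i).2
      · intro c K₀
        obtain ⟨s, hs, hsub⟩ := hscope _ (hgetmem c)
        rw [hg c K₀ s hs hsub]
        refine sum01 _ _ (fun K _ => hint K) ?_
        rw [← hg c K₀ s hs hsub]
        exact (hBasic.2.2.2 c K₀).2
  · choose sv hsv hsvb using fun v : Fin n => exists_bag_of_mem_verts T (hverts v)
    choose sc hsc hscb using fun c : Fin (consList Q).length => hscope _ (hgetmem c)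
    refine ⟨{
      toFun := fun f =>
        (fun v i => ∑ K ∈ (configs Q (sv v).bag).filter (fun K => K v = some i.1), f K,
         fun c K₀ => ∑ K ∈ (configs Q (sc c).bag).filter
             (fun K => restrictCfg K ((consList Q).get c).scope = K₀.1), f K),
      map_add' := by
        intro f g
        refine Prod.ext ?_ ?_ <;> funext <;>
          simp [Finset.sum_add_distrib]
      map_smul' := by
        intro a f
        refine Prod.ext ?_ ?_ <;> funext <;>
          simp [Finset.mul_sum] }, ?_⟩
    intro f hf p hy hg
    refine Prod.ext ?_ ?_
    · funext v i
      exact (hy v i (sv v) (hsv v) (hsvb v)).symm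
    · funext c K₀
      exact (hg c K₀ (sc c) (hsc c) (hscb c)).symm
end

section
/- Let G = (V, E) be a graph with |V| = n that admits a nice tree decomposition of width τ with N nodes. Then there exist a polytope P = {x ∈ ℝ^m : Ax ≤ b, Cx = d}, where m and the total number of rows of A and C are at most c·2^(τ+1)·N for an absolute constant c, and a linear map π : ℝ^m → ℝ^V, such that π(P) equals the independent set polytope of G, i.e., the convex hull of the characteristic vectors χ_S ∈ {0,1}^V of all independent sets S of G. -/
variable {n : ℕ}

namespace ISEF

open Finset

variable {n : ℕ} (G : SimpleGraph (Fin n))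

open Classical in
/-- Configurations at a bag `W`: subsets of `W` with no internal edge. -/
noncomputable def cfg (W : Finset (Fin n)) : Finset (Finset (Fin n)) :=
  W.powerset.filter (fun K => ∀ u ∈ K, ∀ v ∈ K, ¬ G.Adj u v)

lemma mem_cfg {W K : Finset (Fin n)} :
    K ∈ cfg G W ↔ K ⊆ W ∧ ∀ u ∈ K, ∀ v ∈ K, ¬ G.Adj u v := by
  classical
  simp [cfg, Finset.mem_filter, Finset.mem_powerset]

lemma cfg_mono {W W' K : Finset (Fin n)} (h : W ⊆ W') (hK : K ∈ cfg G W) :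
    K ∈ cfg G W' := by
  rw [mem_cfg] at hK ⊢
  exact ⟨hK.1.trans h, hK.2⟩

lemma inter_mem_cfg {S W : Finset (Fin n)} (hS : ∀ u ∈ S, ∀ v ∈ S, ¬ G.Adj u v) :
    S ∩ W ∈ cfg G W := by
  rw [mem_cfg]
  exact ⟨Finset.inter_subset_right, fun u hu v hv =>
    hS u (Finset.mem_of_mem_inter_left hu) v (Finset.mem_of_mem_inter_left hv)⟩

/-- The set of bags of a nice tree. -/
noncomputable def Bags : NiceTree n → Finset (Finset (Fin n))
  | .leaf v => {{v}}
  | .introduce v t => insert (insert v t.bag) (Bags t)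
  | .forget v t => insert (t.bag.erase v) (Bags t)
  | .join t₁ t₂ => Bags t₁ ∪ Bags t₂

lemma bag_mem_Bags (t : NiceTree n) : t.bag ∈ Bags t := by
  induction t with
  | leaf v => simp [Bags, NiceTree.bag]
  | introduce v t ih => simp [Bags, NiceTree.bag]
  | forget v t ih => simp [Bags, NiceTree.bag]
  | join t₁ t₂ ih₁ ih₂ => simp [Bags, NiceTree.bag, ih₁]

lemma card_Bags_le (t : NiceTree n) : (Bags t).card ≤ t.size := by
  induction t with
  | leaf v => simp [Bags, NiceTree.size]
  | introduce v t ih =>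
      calc (Bags (NiceTree.introduce v t)).card ≤ (Bags t).card + 1 :=
            Finset.card_insert_le _ _
        _ ≤ t.size + 1 := by omega
  | forget v t ih =>
      calc (Bags (NiceTree.forget v t)).card ≤ (Bags t).card + 1 :=
            Finset.card_insert_le _ _
        _ ≤ t.size + 1 := by omega
  | join t₁ t₂ ih₁ ih₂ =>
      calc (Bags (NiceTree.join t₁ t₂)).card ≤ (Bags t₁).card + (Bags t₂).card :=
            Finset.card_union_le _ _
        _ ≤ t₁.size + t₂.size := by omega
        _ ≤ (NiceTree.join t₁ t₂).size := by simp [NiceTree.size]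

lemma bag_subset_verts (t : NiceTree n) : t.bag ⊆ t.verts := by
  induction t with
  | leaf v => simp [NiceTree.bag, NiceTree.verts]
  | introduce v t ih =>
      simp only [NiceTree.bag, NiceTree.verts]
      exact Finset.insert_subset_insert _ ih
  | forget v t ih =>
      simp only [NiceTree.bag, NiceTree.verts]
      exact (Finset.erase_subset _ _).trans ih
  | join t₁ t₂ ih₁ ih₂ =>
      simp only [NiceTree.bag, NiceTree.verts]
      exact ih₁.trans Finset.subset_union_left

lemma mem_Bags_subset_verts {t : NiceTree n} {W : Finset (Fin n)}
    (h : W ∈ Bags t) : W ⊆ t.verts := by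
  induction t with
  | leaf v => simp [Bags] at h; simp [h, NiceTree.verts]
  | introduce v t ih =>
      simp only [Bags, Finset.mem_insert] at h
      rcases h with h | h
      · subst h
        exact Finset.insert_subset_insert _ (bag_subset_verts t)
      · exact (ih h).trans (Finset.subset_insert _ _)
  | forget v t ih =>
      simp only [Bags, Finset.mem_insert] at h
      rcases h with h | h
      · subst h
        exact (Finset.erase_subset _ _).trans (bag_subset_verts t)
      · exact ih h
  | join t₁ t₂ ih₁ ih₂ =>
      simp only [Bags, Finset.mem_union] at h
      rcases h with h | h
      · exact (ih₁ h).trans Finset.subset_union_left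
      · exact (ih₂ h).trans Finset.subset_union_right

lemma exists_subtree_of_mem_Bags {t : NiceTree n} {W : Finset (Fin n)}
    (h : W ∈ Bags t) : ∃ s : NiceTree n, s.isSubtree t ∧ s.bag = W := by
  induction t with
  | leaf v =>
      simp only [Bags, Finset.mem_singleton] at h
      exact ⟨.leaf v, rfl, h.symm ▸ rfl⟩
  | introduce v t ih =>
      simp only [Bags, Finset.mem_insert] at h
      rcases h with h | h
      · exact ⟨.introduce v t, Or.inl rfl, h.symm⟩
      · obtain ⟨s, hs, hb⟩ := ih h
        exact ⟨s, Or.inr hs, hb⟩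
  | forget v t ih =>
      simp only [Bags, Finset.mem_insert] at h
      rcases h with h | h
      · exact ⟨.forget v t, Or.inl rfl, h.symm⟩
      · obtain ⟨s, hs, hb⟩ := ih h
        exact ⟨s, Or.inr hs, hb⟩
  | join t₁ t₂ ih₁ ih₂ =>
      simp only [Bags, Finset.mem_union] at h
      rcases h with h | h
      · obtain ⟨s, hs, hb⟩ := ih₁ h
        exact ⟨s, Or.inr (Or.inl hs), hb⟩
      · obtain ⟨s, hs, hb⟩ := ih₂ h
        exact ⟨s, Or.inr (Or.inr hs), hb⟩

lemma bag_mem_Bags_of_isSubtree {s t : NiceTree n} (h : s.isSubtree t) :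
    s.bag ∈ Bags t := by
  induction t with
  | leaf v => rw [NiceTree.isSubtree] at h; subst h; exact bag_mem_Bags _
  | introduce v t ih =>
      rcases h with h | h
      · subst h; exact bag_mem_Bags _
      · simp only [Bags, Finset.mem_insert]; exact Or.inr (ih h)
  | forget v t ih =>
      rcases h with h | h
      · subst h; exact bag_mem_Bags _
      · simp only [Bags, Finset.mem_insert]; exact Or.inr (ih h)
  | join t₁ t₂ ih₁ ih₂ =>
      rcases h with h | h | h
      · subst h; exact bag_mem_Bags _
      · simp only [Bags, Finset.mem_union]; exact Or.inl (ih₁ h)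
      · simp only [Bags, Finset.mem_union]; exact Or.inr (ih₂ h)

lemma exists_bag_of_mem_verts {t : NiceTree n} {v : Fin n} (h : v ∈ t.verts) :
    ∃ W ∈ Bags t, v ∈ W := by
  induction t with
  | leaf w =>
      simp only [NiceTree.verts, Finset.mem_singleton] at h
      exact ⟨{w}, by simp [Bags], by simp [h]⟩
  | introduce w t ih =>
      simp only [NiceTree.verts, Finset.mem_insert] at h
      rcases h with h | h
      · exact ⟨insert w t.bag, by simp [Bags], by simp [h]⟩
      · obtain ⟨W, hW, hv⟩ := ih h
        exact ⟨W, by simp only [Bags, Finset.mem_insert]; exact Or.inr hW, hv⟩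
  | forget w t ih =>
      simp only [NiceTree.verts] at h
      obtain ⟨W, hW, hv⟩ := ih h
      exact ⟨W, by simp only [Bags, Finset.mem_insert]; exact Or.inr hW, hv⟩
  | join t₁ t₂ ih₁ ih₂ =>
      simp only [NiceTree.verts, Finset.mem_union] at h
      rcases h with h | h
      · obtain ⟨W, hW, hv⟩ := ih₁ h
        exact ⟨W, by simp only [Bags, Finset.mem_union]; exact Or.inl hW, hv⟩
      · obtain ⟨W, hW, hv⟩ := ih₂ h
        exact ⟨W, by simp only [Bags, Finset.mem_union]; exact Or.inr hW, hv⟩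

/-- The LP constraints of the extended formulation. -/
noncomputable def Cons (f : Finset (Fin n) → Finset (Fin n) → ℝ) :
    NiceTree n → Prop
  | .leaf v => ∑ K ∈ cfg G {v}, f {v} K = 1
  | .introduce v t =>
      Cons f t ∧ (∑ K ∈ cfg G (insert v t.bag), f (insert v t.bag) K = 1) ∧
      ∀ K ∈ cfg G t.bag,
        ∑ K' ∈ (cfg G (insert v t.bag)).filter (fun K' => K' ∩ t.bag = K),
          f (insert v t.bag) K' = f t.bag K
  | .forget v t =>
      Cons f t ∧ (∑ K ∈ cfg G (t.bag.erase v), f (t.bag.erase v) K = 1) ∧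
      ∀ K ∈ cfg G (t.bag.erase v),
        ∑ K' ∈ (cfg G t.bag).filter (fun K' => K' ∩ t.bag.erase v = K),
          f t.bag K' = f (t.bag.erase v) K
  | .join t₁ t₂ => Cons f t₁ ∧ Cons f t₂

lemma Cons_root_sum {f : Finset (Fin n) → Finset (Fin n) → ℝ} {t : NiceTree n}
    (h : Cons G f t) : ∑ K ∈ cfg G t.bag, f t.bag K = 1 := by
  induction t with
  | leaf v => exact h
  | introduce v t ih => exact h.2.1
  | forget v t ih => exact h.2.1
  | join t₁ t₂ ih₁ ih₂ => exact ih₁ h.1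


open Classical in
/-- `f` vanishes on irrelevant coordinates. -/
def ZeroOut (t : NiceTree n) (f : Finset (Fin n) → Finset (Fin n) → ℝ) : Prop :=
  ∀ W ∈ Bags t, ∀ K, K ∉ cfg G W → f W K = 0

/-- A decomposition of `f` as a distribution over subsets of the vertices. -/
structure IsDecomp (t : NiceTree n) (f : Finset (Fin n) → Finset (Fin n) → ℝ)
    (w : Finset (Fin n) → ℝ) : Prop where
  nonneg : ∀ S, 0 ≤ w S
  zero : ∀ S, ¬ S ⊆ t.verts → w S = 0
  total : ∑ S ∈ t.verts.powerset, w S = 1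
  marg : ∀ W ∈ Bags t, ∀ K,
    f W K = ∑ S ∈ t.verts.powerset.filter (fun S => S ∩ W = K), w S

lemma IsDecomp.w_le {t : NiceTree n} {f w} (hd : IsDecomp t f w)
    {W : Finset (Fin n)} (hW : W ∈ Bags t) {S : Finset (Fin n)}
    (hS : S ⊆ t.verts) : w S ≤ f W (S ∩ W) := by
  classical
  rw [hd.marg W hW (S ∩ W)]
  refine Finset.single_le_sum (fun i _ => hd.nonneg i) ?_
  simp [Finset.mem_filter, Finset.mem_powerset, hS]

lemma IsDecomp.w_zero {t : NiceTree n} {f w} (hd : IsDecomp t f w)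
    (hz : ZeroOut G t f) {W : Finset (Fin n)} (hW : W ∈ Bags t)
    {S : Finset (Fin n)} (hS : S ⊆ t.verts) (hK : S ∩ W ∉ cfg G W) : w S = 0 := by
  have h1 := hd.w_le hW hS
  rw [hz W hW _ hK] at h1
  exact le_antisymm h1 (hd.nonneg S)

/-- Summing fibers over a finite index set. -/
lemma sum_fiber_filter {α β : Type*} [DecidableEq α] [DecidableEq β]
    (s : Finset α) (t' : Finset β) (g : α → β) (F : α → ℝ) :
    ∑ b ∈ t', ∑ a ∈ s.filter (fun a => g a = b), F a
      = ∑ a ∈ s.filter (fun a => g a ∈ t'), F a := by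
  classical
  have h : ∀ b ∈ t', s.filter (fun a => g a = b)
      = (s.filter (fun a => g a ∈ t')).filter (fun a => g a = b) := by
    intro b hb
    rw [Finset.filter_filter]
    apply Finset.filter_congr
    intro a _
    constructor
    · intro h'; exact ⟨h' ▸ hb, h'⟩
    · exact And.right
  calc ∑ b ∈ t', ∑ a ∈ s.filter (fun a => g a = b), F a
      = ∑ b ∈ t', ∑ a ∈ (s.filter (fun a => g a ∈ t')).filter (fun a => g a = b), F a :=
        Finset.sum_congr rfl (fun b hb => by rw [h b hb])
    _ = _ := Finset.sum_fiberwise_of_maps_to (fun a ha => (Finset.mem_filter.mp ha).2) F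

lemma decomp_leaf (v : Fin n) (f : Finset (Fin n) → Finset (Fin n) → ℝ)
    (h0 : ∀ W K, 0 ≤ f W K)
    (hc : Cons G f (.leaf v)) (hz : ZeroOut G (.leaf v) f) :
    ∃ w, IsDecomp (.leaf v) f w := by
  classical
  have hBag : ({v} : Finset (Fin n)) ∈ Bags (NiceTree.leaf v) := by simp [Bags]
  have hverts : (NiceTree.leaf v).verts = {v} := rfl
  have hf0 : ∀ K, K ∉ cfg G {v} → f {v} K = 0 := fun K hK => hz _ hBag K hK
  have hc' : ∑ K ∈ cfg G {v}, f {v} K = 1 := hc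
  refine ⟨fun S => if S ⊆ ({v} : Finset (Fin n)) then f {v} S else 0,
    ?_, ?_, ?_, ?_⟩
  · intro S
    split
    · exact h0 _ _
    · exact le_refl 0
  · intro S hS
    rw [hverts] at hS
    simp [hS]
  · rw [hverts]
    have h1 : ∀ S ∈ ({v} : Finset (Fin n)).powerset,
        (if S ⊆ ({v} : Finset (Fin n)) then f {v} S else 0) = f {v} S := by
      intro S hS
      rw [if_pos (Finset.mem_powerset.mp hS)]
    rw [Finset.sum_congr rfl h1]
    rw [← hc']
    symm
    apply Finset.sum_subset
    · intro K hK
      exact Finset.mem_powerset.mpr (mem_cfg G |>.mp hK).1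
    · intro K _ hK
      exact hf0 K hK
  · intro W hW K
    have hW' : W = {v} := by simpa [Bags] using hW
    subst hW'
    rw [hverts]
    have h1 : ({v} : Finset (Fin n)).powerset.filter (fun S => S ∩ {v} = K)
        = ({v} : Finset (Fin n)).powerset.filter (fun S => S = K) := by
      apply Finset.filter_congr
      intro S hS
      rw [Finset.inter_eq_left.mpr (Finset.mem_powerset.mp hS)]
    rw [h1, Finset.filter_eq']
    by_cases hK : K ∈ ({v} : Finset (Fin n)).powerset
    · rw [if_pos hK, Finset.sum_singleton, if_pos (Finset.mem_powerset.mp hK)]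
    · rw [if_neg hK, Finset.sum_empty]
      apply hf0
      rw [mem_cfg]
      rintro ⟨hsub, -⟩
      exact hK (Finset.mem_powerset.mpr hsub)

lemma decomp_forget (v : Fin n) (t : NiceTree n)
    (f : Finset (Fin n) → Finset (Fin n) → ℝ) (w' : Finset (Fin n) → ℝ)
    (hIH : IsDecomp t f w')
    (hc : Cons G f (.forget v t)) (hz : ZeroOut G (.forget v t) f) :
    IsDecomp (.forget v t) f w' := by
  classical
  have hverts : (NiceTree.forget v t).verts = t.verts := rfl
  have hzt : ZeroOut G t f := fun W hW K hK => hz W (by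
      simp only [Bags, Finset.mem_insert]; exact Or.inr hW) K hK
  have hB0B : t.bag.erase v ⊆ t.bag := Finset.erase_subset _ _
  have hB0mem : t.bag.erase v ∈ Bags (NiceTree.forget v t) := by
    exact Finset.mem_insert_self _ _
  have hc2 : ∀ K ∈ cfg G (t.bag.erase v),
      ∑ K' ∈ (cfg G t.bag).filter (fun K' => K' ∩ t.bag.erase v = K),
        f t.bag K' = f (t.bag.erase v) K := hc.2.2
  have hinter : ∀ S : Finset (Fin n), S ∩ t.bag ∩ t.bag.erase v = S ∩ t.bag.erase v := by
    intro S
    rw [Finset.inter_assoc, Finset.inter_eq_right.mpr hB0B]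
  constructor
  · exact hIH.nonneg
  · intro S hS
    exact hIH.zero S (by rwa [hverts] at hS)
  · rw [hverts]; exact hIH.total
  · intro W hW K
    rw [hverts]
    rcases Finset.mem_insert.mp (by simpa only [Bags] using hW) with hW' | hW'
    · subst hW'
      by_cases hK : K ∈ cfg G (t.bag.erase v)
      · rw [← hc2 K hK]
        calc ∑ K' ∈ (cfg G t.bag).filter (fun K' => K' ∩ t.bag.erase v = K), f t.bag K'
            = ∑ K' ∈ (cfg G t.bag).filter (fun K' => K' ∩ t.bag.erase v = K),
                ∑ S ∈ t.verts.powerset.filter (fun S => S ∩ t.bag = K'), w' S :=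
              Finset.sum_congr rfl (fun K' _ => hIH.marg t.bag (bag_mem_Bags t) K')
          _ = ∑ S ∈ t.verts.powerset.filter (fun S =>
                S ∩ t.bag ∈ (cfg G t.bag).filter (fun K' => K' ∩ t.bag.erase v = K)), w' S :=
              sum_fiber_filter _ _ _ _
          _ = ∑ S ∈ t.verts.powerset.filter (fun S => S ∩ t.bag.erase v = K), w' S := ?_
        apply Finset.sum_subset
        · intro S hS
          simp only [Finset.mem_filter] at hS ⊢
          refine ⟨hS.1, ?_⟩
          rw [← hinter S]
          exact hS.2.2
        · intro S hS hS2
          simp only [Finset.mem_filter] at hS hS2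
          apply hIH.w_zero G hzt (bag_mem_Bags t) (Finset.mem_powerset.mp hS.1)
          intro hmem
          exact hS2 ⟨hS.1, hmem, by rw [hinter S]; exact hS.2⟩
      · rw [hz _ hB0mem K hK]
        symm
        apply Finset.sum_eq_zero
        intro S hS
        simp only [Finset.mem_filter] at hS
        apply hIH.w_zero G hzt (bag_mem_Bags t) (Finset.mem_powerset.mp hS.1)
        intro hmem
        apply hK
        rw [mem_cfg] at hmem ⊢
        constructor
        · rw [← hS.2]; exact Finset.inter_subset_right
        · intro x hx y hy
          rw [← hS.2] at hx hy
          refine hmem.2 x ?_ y ?_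
          · exact Finset.mem_inter.mpr ⟨(Finset.mem_inter.mp hx).1,
              hB0B (Finset.mem_inter.mp hx).2⟩
          · exact Finset.mem_inter.mpr ⟨(Finset.mem_inter.mp hy).1,
              hB0B (Finset.mem_inter.mp hy).2⟩
    · exact hIH.marg W hW' K

lemma decomp_introduce (v : Fin n) (t : NiceTree n)
    (f : Finset (Fin n) → Finset (Fin n) → ℝ) (w' : Finset (Fin n) → ℝ)
    (hv : v ∉ t.verts)
    (h0 : ∀ W K, 0 ≤ f W K)
    (hIH : IsDecomp t f w')
    (hc : Cons G f (.introduce v t)) (hz : ZeroOut G (.introduce v t) f) :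
    ∃ w, IsDecomp (.introduce v t) f w := by
  classical
  have hverts : (NiceTree.introduce v t).verts = insert v t.verts := rfl
  have hzt : ZeroOut G t f := fun W hW K hK => hz W (by
      simp only [Bags, Finset.mem_insert]; exact Or.inr hW) K hK
  have hvB : v ∉ t.bag := fun h => hv (bag_subset_verts t h)
  have hBmem' : insert v t.bag ∈ Bags (NiceTree.introduce v t) :=
    Finset.mem_insert_self _ _
  have hBt : t.bag ∈ Bags t := bag_mem_Bags t
  -- Fact F1
  have hF1 : ∀ K ∈ cfg G t.bag,
      f t.bag K = f (insert v t.bag) K + f (insert v t.bag) (insert v K) := by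
    intro K hK
    have hKB : K ⊆ t.bag := ((mem_cfg G).mp hK).1
    have hvK : v ∉ K := fun h => hvB (hKB h)
    have hKcfg' : K ∈ cfg G (insert v t.bag) :=
      cfg_mono G (Finset.subset_insert _ _) hK
    rw [← hc.2.2 K hK]
    have hpair : ∑ K' ∈ ({K, insert v K} : Finset (Finset (Fin n))),
        f (insert v t.bag) K'
        = f (insert v t.bag) K + f (insert v t.bag) (insert v K) :=
      Finset.sum_pair (fun h => hvK (h ▸ Finset.mem_insert_self v K))
    rw [← hpair]
    apply Finset.sum_subset
    · intro K' hK'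
      simp only [Finset.mem_filter] at hK'
      have hK'sub : K' ⊆ insert v t.bag := ((mem_cfg G).mp hK'.1).1
      simp only [Finset.mem_insert, Finset.mem_singleton]
      by_cases hvK' : v ∈ K'
      · right
        rw [← hK'.2]
        ext x
        simp only [Finset.mem_insert, Finset.mem_inter]
        constructor
        · intro hx
          rcases Finset.mem_insert.mp (hK'sub hx) with h | h
          · exact Or.inl h
          · exact Or.inr ⟨hx, h⟩
        · rintro (rfl | ⟨hx, -⟩)
          · exact hvK'
          · exact hx
      · left
        rw [← hK'.2]
        symm
        apply Finset.inter_eq_left.mpr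
        intro x hx
        rcases Finset.mem_insert.mp (hK'sub hx) with h | h
        · exact absurd (h ▸ hx) hvK'
        · exact h
    · intro K' hK' hK'2
      simp only [Finset.mem_insert, Finset.mem_singleton] at hK'
      rcases hK' with rfl | rfl
      · exact (hK'2 (Finset.mem_filter.mpr
          ⟨hKcfg', Finset.inter_eq_left.mpr hKB⟩)).elim
      · apply hz _ hBmem'
        intro hmem
        apply hK'2
        refine Finset.mem_filter.mpr ⟨hmem, ?_⟩
        rw [Finset.insert_inter_of_notMem hvB]
        exact Finset.inter_eq_left.mpr hKB
  -- zero propagation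
  have hrz : ∀ K ⊆ t.bag, f t.bag K = 0 →
      f (insert v t.bag) K = 0 ∧ f (insert v t.bag) (insert v K) = 0 := by
    intro K hKB hK0
    by_cases hK : K ∈ cfg G t.bag
    · have h1 := hF1 K hK
      rw [hK0] at h1
      have h2 := h0 (insert v t.bag) K
      have h3 := h0 (insert v t.bag) (insert v K)
      constructor <;> linarith
    · obtain ⟨u, hu, x, hx, hadj⟩ : ∃ u ∈ K, ∃ x ∈ K, G.Adj u x := by
        by_contra hno
        push_neg at hno
        exact hK ((mem_cfg G).mpr ⟨hKB, fun a ha b hb => hno a ha b hb⟩)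
      constructor
      · apply hz _ hBmem'
        rw [mem_cfg]
        rintro ⟨-, hpair⟩
        exact hpair u hu x hx hadj
      · apply hz _ hBmem'
        rw [mem_cfg]
        rintro ⟨-, hpair⟩
        exact hpair u (Finset.mem_insert_of_mem hu) x (Finset.mem_insert_of_mem hx) hadj
  -- the new weights
  set wnew : Finset (Fin n) → ℝ := fun X =>
    if v ∈ X
    then w' (X.erase v) *
      (f (insert v t.bag) (insert v (X.erase v ∩ t.bag)) / f t.bag (X.erase v ∩ t.bag))
    else w' X * (f (insert v t.bag) (X ∩ t.bag) / f t.bag (X ∩ t.bag)) with hwnew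
  have hwS : ∀ S, v ∉ S → wnew S
      = w' S * (f (insert v t.bag) (S ∩ t.bag) / f t.bag (S ∩ t.bag)) := by
    intro S hS
    simp only [hwnew, if_neg hS]
  have hwvS : ∀ S, v ∉ S → wnew (insert v S)
      = w' S * (f (insert v t.bag) (insert v (S ∩ t.bag)) / f t.bag (S ∩ t.bag)) := by
    intro S hS
    simp only [hwnew, if_pos (Finset.mem_insert_self v S), Finset.erase_insert hS]
  have hvpow : ∀ S ∈ t.verts.powerset, v ∉ S :=
    fun S hS h => hv (Finset.mem_powerset.mp hS h)
  -- key identity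
  have key : ∀ S ∈ t.verts.powerset, wnew S + wnew (insert v S) = w' S := by
    intro S hS
    have hvS := hvpow S hS
    rw [hwS S hvS, hwvS S hvS]
    by_cases hr : f t.bag (S ∩ t.bag) = 0
    · have hw0 : w' S = 0 := by
        have h1 := hIH.w_le hBt (Finset.mem_powerset.mp hS)
        rw [hr] at h1
        exact le_antisymm h1 (hIH.nonneg S)
      simp [hw0]
    · have hK : S ∩ t.bag ∈ cfg G t.bag := by
        by_contra hK
        exact hr (hzt t.bag hBt _ hK)
      rw [← mul_add, ← add_div, ← hF1 _ hK, div_self hr, mul_one]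
  -- sum splitting over the powerset of `insert v t.verts`
  have hdisj : Disjoint t.verts.powerset (t.verts.powerset.image (insert v)) := by
    rw [Finset.disjoint_left]
    intro a ha hb
    obtain ⟨b, hb', rfl⟩ := Finset.mem_image.mp hb
    exact hv (Finset.mem_powerset.mp ha (Finset.mem_insert_self v b))
  have hsplit : ∀ F : Finset (Fin n) → ℝ,
      ∑ X ∈ (insert v t.verts).powerset, F X
        = ∑ S ∈ t.verts.powerset, F S + ∑ S ∈ t.verts.powerset, F (insert v S) := by
    intro F
    rw [Finset.powerset_insert, Finset.sum_union hdisj, Finset.sum_image ?_]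
    intro x hx y hy hxy
    have hvx := hvpow x hx
    have hvy := hvpow y hy
    rw [← Finset.erase_insert hvx, hxy, Finset.erase_insert hvy]
  refine ⟨wnew, ?_, ?_, ?_, ?_⟩
  · intro S
    simp only [hwnew]
    split
    · exact mul_nonneg (hIH.nonneg _) (div_nonneg (h0 _ _) (h0 _ _))
    · exact mul_nonneg (hIH.nonneg _) (div_nonneg (h0 _ _) (h0 _ _))
  · intro S hS
    rw [hverts] at hS
    by_cases hvS : v ∈ S
    · simp only [hwnew, if_pos hvS]
      have hsub : ¬ S.erase v ⊆ t.verts := by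
        intro h
        apply hS
        intro x hx
        rcases eq_or_ne x v with rfl | hxv
        · exact Finset.mem_insert_self _ _
        · exact Finset.mem_insert_of_mem (h (Finset.mem_erase.mpr ⟨hxv, hx⟩))
      rw [hIH.zero _ hsub, zero_mul]
    · simp only [hwnew, if_neg hvS]
      have hsub : ¬ S ⊆ t.verts := fun h =>
        hS (h.trans (Finset.subset_insert _ _))
      rw [hIH.zero _ hsub, zero_mul]
  · rw [hverts, hsplit wnew, ← Finset.sum_add_distrib,
      Finset.sum_congr rfl key]
    exact hIH.total
  · intro W hW K
    rw [hverts]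
    have hW2 : W = insert v t.bag ∨ W ∈ Bags t := by
      simpa only [Bags, Finset.mem_insert] using hW
    rcases hW2 with rfl | hW'
    · -- root bag
      rw [Finset.sum_filter, hsplit (fun X => if X ∩ insert v t.bag = K then wnew X else 0)]
      have e1 : ∀ S ∈ t.verts.powerset,
          (if S ∩ insert v t.bag = K then wnew S else 0)
            = if S ∩ t.bag = K then wnew S else 0 := by
        intro S hS
        rw [Finset.inter_insert_of_notMem (hvpow S hS)]
      have e2 : ∀ S ∈ t.verts.powerset,
          (if insert v S ∩ insert v t.bag = K then wnew (insert v S) else 0)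
            = if insert v (S ∩ t.bag) = K then wnew (insert v S) else 0 := by
        intro S hS
        rw [Finset.insert_inter_of_mem (Finset.mem_insert_self v t.bag),
          Finset.inter_insert_of_notMem (hvpow S hS)]
      rw [Finset.sum_congr rfl e1, Finset.sum_congr rfl e2]
      by_cases hvK : v ∈ K
      · -- first sum vanishes
        have z1 : ∀ S ∈ t.verts.powerset, (if S ∩ t.bag = K then wnew S else 0) = 0 := by
          intro S hS
          rw [if_neg]
          intro h
          exact (Finset.mem_inter.mp (h ▸ hvK)).1 |> hvpow S hS
        rw [Finset.sum_congr rfl z1, Finset.sum_const_zero, zero_add]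
        have e3 : ∀ S ∈ t.verts.powerset,
            (if insert v (S ∩ t.bag) = K then wnew (insert v S) else 0)
              = (if S ∩ t.bag = K.erase v then w' S else 0)
                * (f (insert v t.bag) K / f t.bag (K.erase v)) := by
          intro S hS
          have hvS := hvpow S hS
          have hiff : insert v (S ∩ t.bag) = K ↔ S ∩ t.bag = K.erase v := by
            constructor
            · intro h
              rw [← h, Finset.erase_insert]
              intro hmem
              exact hvS (Finset.mem_inter.mp hmem).1
            · intro h
              rw [h, Finset.insert_erase hvK]
          by_cases hcond : S ∩ t.bag = K.erase v
          · rw [if_pos (hiff.mpr hcond), if_pos hcond, hwvS S hvS, hcond,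
              Finset.insert_erase hvK]
          · rw [if_neg (fun h => hcond (hiff.mp h)), if_neg hcond, zero_mul]
        rw [Finset.sum_congr rfl e3, ← Finset.sum_mul, ← Finset.sum_filter,
          ← hIH.marg t.bag hBt (K.erase v)]
        by_cases hr : f t.bag (K.erase v) = 0
        · rw [hr, zero_mul]
          by_cases hKe : K.erase v ⊆ t.bag
          · have h2 := (hrz _ hKe hr).2
            rw [Finset.insert_erase hvK] at h2
            exact h2
          · apply hz _ hBmem'
            rw [mem_cfg]
            rintro ⟨hsub, -⟩
            apply hKe
            intro x hx
            have hxK : x ∈ K := Finset.mem_of_mem_erase hx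
            rcases Finset.mem_insert.mp (hsub hxK) with rfl | h
            · exact absurd rfl (Finset.mem_erase.mp hx).1
            · exact h
        · rw [mul_comm, div_mul_cancel₀ _ hr]
      · -- v ∉ K
        have z2 : ∀ S ∈ t.verts.powerset,
            (if insert v (S ∩ t.bag) = K then wnew (insert v S) else 0) = 0 := by
          intro S hS
          rw [if_neg]
          intro h
          exact hvK (h ▸ Finset.mem_insert_self v (S ∩ t.bag))
        rw [Finset.sum_congr rfl z2, Finset.sum_const_zero, add_zero]
        have e3 : ∀ S ∈ t.verts.powerset,
            (if S ∩ t.bag = K then wnew S else 0)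
              = (if S ∩ t.bag = K then w' S else 0)
                  * (f (insert v t.bag) K / f t.bag K) := by
          intro S hS
          by_cases hcond : S ∩ t.bag = K
          · rw [if_pos hcond, if_pos hcond, hwS S (hvpow S hS), hcond]
          · rw [if_neg hcond, if_neg hcond, zero_mul]
        rw [Finset.sum_congr rfl e3, ← Finset.sum_mul, ← Finset.sum_filter,
          ← hIH.marg t.bag hBt K]
        by_cases hr : f t.bag K = 0
        · rw [hr, zero_mul]
          by_cases hKe : K ⊆ t.bag
          · exact (hrz _ hKe hr).1
          · apply hz _ hBmem'
            rw [mem_cfg]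
            rintro ⟨hsub, -⟩
            apply hKe
            intro x hx
            rcases Finset.mem_insert.mp (hsub hx) with rfl | h
            · exact absurd hx hvK
            · exact h
        · rw [mul_comm, div_mul_cancel₀ _ hr]
    · -- a bag of the subtree
      have hvW : v ∉ W := fun h => hv (mem_Bags_subset_verts hW' h)
      rw [Finset.sum_filter, hsplit (fun X => if X ∩ W = K then wnew X else 0)]
      have e2 : ∀ S ∈ t.verts.powerset,
          (if insert v S ∩ W = K then wnew (insert v S) else 0)
            = if S ∩ W = K then wnew (insert v S) else 0 := by
        intro S _
        rw [Finset.insert_inter_of_notMem hvW]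
      rw [Finset.sum_congr rfl e2, ← Finset.sum_add_distrib]
      have e3 : ∀ S ∈ t.verts.powerset,
          ((if S ∩ W = K then wnew S else 0) + (if S ∩ W = K then wnew (insert v S) else 0))
            = if S ∩ W = K then w' S else 0 := by
        intro S hS
        by_cases hcond : S ∩ W = K
        · rw [if_pos hcond, if_pos hcond, if_pos hcond, key S hS]
        · rw [if_neg hcond, if_neg hcond, if_neg hcond, add_zero]
      rw [Finset.sum_congr rfl e3, ← Finset.sum_filter]
      exact hIH.marg W hW' K

lemma decomp_join (t₁ t₂ : NiceTree n)
    (f : Finset (Fin n) → Finset (Fin n) → ℝ)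
    (w₁ w₂ : Finset (Fin n) → ℝ)
    (hbag : t₁.bag = t₂.bag)
    (hI : t₁.verts ∩ t₂.verts ⊆ t₁.bag)
    (h0 : ∀ W K, 0 ≤ f W K)
    (hIH₁ : IsDecomp t₁ f w₁) (hIH₂ : IsDecomp t₂ f w₂)
    (hc : Cons G f (.join t₁ t₂)) (hz : ZeroOut G (.join t₁ t₂) f) :
    ∃ w, IsDecomp (.join t₁ t₂) f w := by
  classical
  have hverts : (NiceTree.join t₁ t₂).verts = t₁.verts ∪ t₂.verts := rfl
  have hBV₁ : t₁.bag ⊆ t₁.verts := bag_subset_verts t₁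
  have hBV₂ : t₁.bag ⊆ t₂.verts := hbag ▸ bag_subset_verts t₂
  have hBmem₁ : t₁.bag ∈ Bags t₁ := bag_mem_Bags t₁
  have hBmem₂ : t₁.bag ∈ Bags t₂ := hbag ▸ bag_mem_Bags t₂
  have hBmemJ : t₁.bag ∈ Bags (NiceTree.join t₁ t₂) := by
    simp only [Bags, Finset.mem_union]
    exact Or.inl hBmem₁
  -- the generic one-sided computation
  have key : ∀ (VA VB : Finset (Fin n)) (wa wb : Finset (Fin n) → ℝ),
      t₁.bag ⊆ VA → t₁.bag ⊆ VB → VB ∩ VA ⊆ t₁.bag →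
      (∀ S, 0 ≤ wa S) →
      (∀ K', f t₁.bag K'
          = ∑ S ∈ VA.powerset.filter (fun S => S ∩ t₁.bag = K'), wa S) →
      (∀ K', f t₁.bag K'
          = ∑ S ∈ VB.powerset.filter (fun S => S ∩ t₁.bag = K'), wb S) →
      ∀ W, W ⊆ VA →
      (∀ K', f W K' = ∑ S ∈ VA.powerset.filter (fun S => S ∩ W = K'), wa S) →
      ∀ K, f W K = ∑ X ∈ (VA ∪ VB).powerset.filter (fun X => X ∩ W = K),
          wa (X ∩ VA) * wb (X ∩ VB) / f t₁.bag (X ∩ t₁.bag) := by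
    intro VA VB wa wb hBA hBB hIA hwa0 margAB margBB W hWA margAW K
    have hsub2A : ∀ P : Finset (Fin n) × Finset (Fin n),
        P.1 ⊆ VA → P.2 ⊆ VB → P.1 ∩ t₁.bag = P.2 ∩ t₁.bag → P.2 ∩ VA ⊆ P.1 := by
      intro P h1 h2 hcomp x hx
      have hxB : x ∈ t₁.bag := hIA (Finset.mem_inter.mpr
        ⟨h2 (Finset.mem_inter.mp hx).1, (Finset.mem_inter.mp hx).2⟩)
      have : x ∈ P.2 ∩ t₁.bag := Finset.mem_inter.mpr ⟨(Finset.mem_inter.mp hx).1, hxB⟩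
      rw [← hcomp] at this
      exact (Finset.mem_inter.mp this).1
    have hsub1B : ∀ P : Finset (Fin n) × Finset (Fin n),
        P.1 ⊆ VA → P.2 ⊆ VB → P.1 ∩ t₁.bag = P.2 ∩ t₁.bag → P.1 ∩ VB ⊆ P.2 := by
      intro P h1 h2 hcomp x hx
      have hxB : x ∈ t₁.bag := hIA (Finset.mem_inter.mpr
        ⟨(Finset.mem_inter.mp hx).2, h1 (Finset.mem_inter.mp hx).1⟩)
      have : x ∈ P.1 ∩ t₁.bag := Finset.mem_inter.mpr ⟨(Finset.mem_inter.mp hx).1, hxB⟩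
      rw [hcomp] at this
      exact (Finset.mem_inter.mp this).1
    rw [Finset.sum_filter]
    rw [Finset.sum_nbij' (i := fun X => (X ∩ VA, X ∩ VB)) (j := fun P => P.1 ∪ P.2)
      (t := (VA.powerset ×ˢ VB.powerset).filter (fun P => P.1 ∩ t₁.bag = P.2 ∩ t₁.bag))
      (g := fun P => if P.1 ∩ W = K
        then wa P.1 * wb P.2 / f t₁.bag (P.1 ∩ t₁.bag) else 0)
      ?_ ?_ ?_ ?_ ?_]
    rotate_left
    · -- i maps into t
      intro X hX
      simp only [Finset.mem_filter, Finset.mem_product, Finset.mem_powerset]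
      refine ⟨⟨Finset.inter_subset_right, Finset.inter_subset_right⟩, ?_⟩
      rw [Finset.inter_assoc, Finset.inter_eq_right.mpr hBA,
        Finset.inter_assoc, Finset.inter_eq_right.mpr hBB]
    · -- j maps back
      intro P hP
      simp only [Finset.mem_filter, Finset.mem_product, Finset.mem_powerset] at hP
      exact Finset.mem_powerset.mpr (Finset.union_subset_union hP.1.1 hP.1.2)
    · -- left inverse
      intro X hX
      have hX' := Finset.mem_powerset.mp hX
      simp only
      rw [← Finset.inter_union_distrib_left]
      exact Finset.inter_eq_left.mpr hX'
    · -- right inverse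
      intro P hP
      simp only [Finset.mem_filter, Finset.mem_product, Finset.mem_powerset] at hP
      have e1 : (P.1 ∪ P.2) ∩ VA = P.1 := by
        rw [Finset.union_inter_distrib_right, Finset.inter_eq_left.mpr hP.1.1]
        exact Finset.union_eq_left.mpr (hsub2A P hP.1.1 hP.1.2 hP.2)
      have e2 : (P.1 ∪ P.2) ∩ VB = P.2 := by
        rw [Finset.union_inter_distrib_right, Finset.inter_eq_left.mpr hP.1.2]
        exact Finset.union_eq_right.mpr (hsub1B P hP.1.1 hP.1.2 hP.2)
      rw [e1, e2]
    · -- summand agreement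
      intro X hX
      have hX' := Finset.mem_powerset.mp hX
      have e1 : X ∩ VA ∩ W = X ∩ W := by
        rw [Finset.inter_assoc, Finset.inter_eq_right.mpr hWA]
      have e2 : X ∩ VA ∩ t₁.bag = X ∩ t₁.bag := by
        rw [Finset.inter_assoc, Finset.inter_eq_right.mpr hBA]
      simp only
      rw [e1, e2]
    · -- now compute over the pairs
      rw [Finset.sum_filter, Finset.sum_product]
      have inner : ∀ S1 ∈ VA.powerset,
          (∑ S2 ∈ VB.powerset,
            if S1 ∩ t₁.bag = S2 ∩ t₁.bag
            then (if S1 ∩ W = K then wa S1 * wb S2 / f t₁.bag (S1 ∩ t₁.bag) else 0)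
            else 0)
          = if S1 ∩ W = K then wa S1 else 0 := by
        intro S1 hS1
        by_cases hcond : S1 ∩ W = K
        · rw [if_pos hcond]
          have e : ∀ S2 ∈ VB.powerset,
              (if S1 ∩ t₁.bag = S2 ∩ t₁.bag
                then (if S1 ∩ W = K then wa S1 * wb S2 / f t₁.bag (S1 ∩ t₁.bag) else 0)
                else 0)
              = (if S2 ∩ t₁.bag = S1 ∩ t₁.bag then wb S2 else 0)
                  * (wa S1 / f t₁.bag (S1 ∩ t₁.bag)) := by
            intro S2 _
            by_cases hc2 : S1 ∩ t₁.bag = S2 ∩ t₁.bag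
            · rw [if_pos hc2, if_pos hcond, if_pos hc2.symm, mul_comm (wa S1),
                mul_div_assoc]
            · rw [if_neg hc2, if_neg (fun h => hc2 h.symm), zero_mul]
          rw [Finset.sum_congr rfl e, ← Finset.sum_mul, ← Finset.sum_filter,
            ← margBB (S1 ∩ t₁.bag)]
          by_cases hg : f t₁.bag (S1 ∩ t₁.bag) = 0
          · have hwa1 : wa S1 = 0 := by
              have hmem : S1 ∈ VA.powerset.filter
                  (fun S => S ∩ t₁.bag = S1 ∩ t₁.bag) :=
                Finset.mem_filter.mpr ⟨hS1, rfl⟩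
              have hle : wa S1 ≤ f t₁.bag (S1 ∩ t₁.bag) := by
                rw [margAB (S1 ∩ t₁.bag)]
                exact Finset.single_le_sum (fun i _ => hwa0 i) hmem
              rw [hg] at hle
              exact le_antisymm hle (hwa0 S1)
            simp [hwa1, hg]
          · rw [mul_comm, div_mul_cancel₀ _ hg]
        · rw [if_neg hcond]
          apply Finset.sum_eq_zero
          intro S2 _
          rw [if_neg hcond, ite_self]
      rw [Finset.sum_congr rfl inner, ← Finset.sum_filter]
      exact margAW K
  -- the glued weights
  set w : Finset (Fin n) → ℝ := fun X =>
    if X ⊆ t₁.verts ∪ t₂.verts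
    then w₁ (X ∩ t₁.verts) * w₂ (X ∩ t₂.verts) / f t₁.bag (X ∩ t₁.bag)
    else 0 with hw
  have margJ : ∀ W ∈ Bags (NiceTree.join t₁ t₂), ∀ K,
      f W K = ∑ X ∈ (t₁.verts ∪ t₂.verts).powerset.filter (fun X => X ∩ W = K), w X := by
    intro W hW K
    have hW2 : W ∈ Bags t₁ ∨ W ∈ Bags t₂ := by
      simpa only [Bags, Finset.mem_union] using hW
    rcases hW2 with hW' | hW'
    · have e : ∀ X ∈ (t₁.verts ∪ t₂.verts).powerset.filter (fun X => X ∩ W = K),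
          w X = w₁ (X ∩ t₁.verts) * w₂ (X ∩ t₂.verts) / f t₁.bag (X ∩ t₁.bag) := by
        intro X hX
        rw [hw]
        exact if_pos (Finset.mem_powerset.mp (Finset.mem_filter.mp hX).1)
      rw [Finset.sum_congr rfl e]
      exact key t₁.verts t₂.verts w₁ w₂ hBV₁ hBV₂
        (fun x hx => hI (Finset.inter_comm t₂.verts t₁.verts ▸ hx))
        hIH₁.nonneg (hIH₁.marg t₁.bag hBmem₁) (hIH₂.marg t₁.bag hBmem₂)
        W (mem_Bags_subset_verts hW') (hIH₁.marg W hW') K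
    · have hcomm : t₁.verts ∪ t₂.verts = t₂.verts ∪ t₁.verts := Finset.union_comm _ _
      rw [hcomm]
      have e : ∀ X ∈ (t₂.verts ∪ t₁.verts).powerset.filter (fun X => X ∩ W = K),
          w X = w₂ (X ∩ t₂.verts) * w₁ (X ∩ t₁.verts) / f t₁.bag (X ∩ t₁.bag) := by
        intro X hX
        rw [hw]
        simp only
        rw [if_pos (hcomm ▸ Finset.mem_powerset.mp (Finset.mem_filter.mp hX).1),
          mul_comm (w₁ (X ∩ t₁.verts))]
      rw [Finset.sum_congr rfl e]
      exact key t₂.verts t₁.verts w₂ w₁ hBV₂ hBV₁ hI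
        hIH₂.nonneg (hIH₂.marg t₁.bag hBmem₂) (hIH₁.marg t₁.bag hBmem₁)
        W (mem_Bags_subset_verts hW') (hIH₂.marg W hW') K
  refine ⟨w, ?_, ?_, ?_, ?_⟩
  · intro S
    rw [hw]
    simp only
    split
    · exact div_nonneg (mul_nonneg (hIH₁.nonneg _) (hIH₂.nonneg _)) (h0 _ _)
    · exact le_refl 0
  · intro S hS
    rw [hverts] at hS
    rw [hw]
    exact if_neg hS
  · rw [hverts]
    rw [← Finset.sum_fiberwise ((t₁.verts ∪ t₂.verts).powerset)
      (fun X => X ∩ t₁.bag) w]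
    have e : ∀ K : Finset (Fin n),
        (∑ X ∈ (t₁.verts ∪ t₂.verts).powerset.filter (fun X => X ∩ t₁.bag = K), w X)
          = f t₁.bag K := fun K => (margJ t₁.bag hBmemJ K).symm
    rw [Finset.sum_congr rfl (fun K _ => e K)]
    have hsub : cfg G t₁.bag ⊆ (Finset.univ : Finset (Finset (Fin n))) :=
      Finset.subset_univ _
    rw [← Finset.sum_subset hsub (fun K _ hK => hz t₁.bag hBmemJ K hK)]
    exact Cons_root_sum G (t := NiceTree.join t₁ t₂) hc
  · intro W hW K
    rw [hverts]
    exact margJ W hW K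

lemma decomp (t : NiceTree n) (f : Finset (Fin n) → Finset (Fin n) → ℝ)
    (h0 : ∀ W K, 0 ≤ f W K) :
    t.valid → Cons G f t → ZeroOut G t f → ∃ w, IsDecomp t f w := by
  induction t with
  | leaf v =>
      intro _ hc hz
      exact decomp_leaf G v f h0 hc hz
  | introduce v t ih =>
      intro hv hc hz
      have hzt : ZeroOut G t f := fun W hW K hK => hz W (by
        simp only [Bags, Finset.mem_insert]; exact Or.inr hW) K hK
      obtain ⟨w', hw'⟩ := ih hv.2 hc.1 hzt
      exact decomp_introduce G v t f w' hv.1 h0 hw' hc hz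
  | forget v t ih =>
      intro hv hc hz
      have hzt : ZeroOut G t f := fun W hW K hK => hz W (by
        simp only [Bags, Finset.mem_insert]; exact Or.inr hW) K hK
      obtain ⟨w', hw'⟩ := ih hv.2 hc.1 hzt
      exact ⟨w', decomp_forget G v t f w' hw' hc hz⟩
  | join t₁ t₂ ih₁ ih₂ =>
      intro hv hc hz
      have hzt₁ : ZeroOut G t₁ f := fun W hW K hK => hz W (by
        simp only [Bags, Finset.mem_union]; exact Or.inl hW) K hK
      have hzt₂ : ZeroOut G t₂ f := fun W hW K hK => hz W (by
        simp only [Bags, Finset.mem_union]; exact Or.inr hW) K hK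
      obtain ⟨w₁, hw₁⟩ := ih₁ hv.2.2.1 hc.1 hzt₁
      obtain ⟨w₂, hw₂⟩ := ih₂ hv.2.2.2 hc.2 hzt₂
      exact decomp_join G t₁ t₂ f w₁ w₂ hv.1 hv.2.1 h0 hw₁ hw₂ hc hz

lemma Cons_congr {f g : Finset (Fin n) → Finset (Fin n) → ℝ} (t : NiceTree n)
    (h : ∀ W ∈ Bags t, ∀ K, f W K = g W K) (hg : Cons G g t) : Cons G f t := by
  induction t with
  | leaf v =>
      show (∑ K ∈ cfg G {v}, f {v} K = 1)
      rw [Finset.sum_congr rfl (fun K _ => h {v} (bag_mem_Bags (.leaf v)) K)]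
      exact hg
  | introduce v t ih =>
      have hroot : insert v t.bag ∈ Bags (NiceTree.introduce v t) :=
        Finset.mem_insert_self _ _
      have hchildW : ∀ W ∈ Bags t, W ∈ Bags (NiceTree.introduce v t) := fun W hW => by
        simp only [Bags, Finset.mem_insert]; exact Or.inr hW
      refine ⟨ih (fun W hW K => h W (hchildW W hW) K) hg.1, ?_, ?_⟩
      · rw [Finset.sum_congr rfl (fun K _ => h _ hroot K)]
        exact hg.2.1
      · intro K hK
        rw [Finset.sum_congr rfl (fun K' _ => h _ hroot K'),
          h t.bag (hchildW _ (bag_mem_Bags t)) K]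
        exact hg.2.2 K hK
  | forget v t ih =>
      have hroot : t.bag.erase v ∈ Bags (NiceTree.forget v t) :=
        Finset.mem_insert_self _ _
      have hchildW : ∀ W ∈ Bags t, W ∈ Bags (NiceTree.forget v t) := fun W hW => by
        simp only [Bags, Finset.mem_insert]; exact Or.inr hW
      refine ⟨ih (fun W hW K => h W (hchildW W hW) K) hg.1, ?_, ?_⟩
      · rw [Finset.sum_congr rfl (fun K _ => h _ hroot K)]
        exact hg.2.1
      · intro K hK
        rw [Finset.sum_congr rfl (fun K' _ => h _ (hchildW _ (bag_mem_Bags t)) K'),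
          h _ hroot K]
        exact hg.2.2 K hK
  | join t₁ t₂ ih₁ ih₂ =>
      have h₁ : ∀ W ∈ Bags t₁, W ∈ Bags (NiceTree.join t₁ t₂) := fun W hW => by
        simp only [Bags, Finset.mem_union]; exact Or.inl hW
      have h₂ : ∀ W ∈ Bags t₂, W ∈ Bags (NiceTree.join t₁ t₂) := fun W hW => by
        simp only [Bags, Finset.mem_union]; exact Or.inr hW
      exact ⟨ih₁ (fun W hW K => h W (h₁ W hW) K) hg.1,
        ih₂ (fun W hW K => h W (h₂ W hW) K) hg.2⟩

lemma integral_cons (S : Finset (Fin n)) (hS : ∀ u ∈ S, ∀ v' ∈ S, ¬ G.Adj u v')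
    (t : NiceTree n) : Cons G (fun W K => if K = S ∩ W then (1 : ℝ) else 0) t := by
  classical
  have hroot : ∀ W : Finset (Fin n),
      ∑ K ∈ cfg G W, (if K = S ∩ W then (1 : ℝ) else 0) = 1 := by
    intro W
    rw [Finset.sum_ite_eq' (cfg G W) (S ∩ W) (fun _ => (1 : ℝ)),
      if_pos (inter_mem_cfg G hS)]
  have hcons : ∀ (B' B0 : Finset (Fin n)), B0 ⊆ B' → ∀ K,
      (∑ K' ∈ (cfg G B').filter (fun K' => K' ∩ B0 = K),
        (if K' = S ∩ B' then (1 : ℝ) else 0))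
        = if K = S ∩ B0 then (1 : ℝ) else 0 := by
    intro B' B0 hsub K
    rw [Finset.sum_ite_eq' _ (S ∩ B') (fun _ => (1 : ℝ))]
    have hmem : S ∩ B' ∈ cfg G B' := inter_mem_cfg G hS
    have hin : S ∩ B' ∩ B0 = S ∩ B0 := by
      rw [Finset.inter_assoc, Finset.inter_eq_right.mpr hsub]
    by_cases hK : K = S ∩ B0
    · rw [if_pos hK, if_pos (Finset.mem_filter.mpr ⟨hmem, by rw [hin, hK]⟩)]
    · rw [if_neg hK, if_neg]
      intro hmem2
      exact hK (by rw [← (Finset.mem_filter.mp hmem2).2, hin])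
  induction t with
  | leaf v => exact hroot {v}
  | introduce v t ih =>
      exact ⟨ih, hroot _, fun K _ => hcons (insert v t.bag) t.bag
        (Finset.subset_insert _ _) K⟩
  | forget v t ih =>
      exact ⟨ih, hroot _, fun K _ => hcons t.bag (t.bag.erase v)
        (Finset.erase_subset _ _) K⟩
  | join t₁ t₂ ih₁ ih₂ => exact ⟨ih₁, ih₂⟩

lemma card_cfg_le (W : Finset (Fin n)) {k : ℕ} (h : W.card ≤ k) :
    (cfg G W).card ≤ 2 ^ k := by
  classical
  calc (cfg G W).card ≤ W.powerset.card := Finset.card_le_card (by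
        intro K hK
        exact Finset.mem_powerset.mpr ((mem_cfg G).mp hK).1)
    _ = 2 ^ W.card := Finset.card_powerset W
    _ ≤ 2 ^ k := Nat.pow_le_pow_right (by norm_num) h

lemma isSubtree_refl (t : NiceTree n) : t.isSubtree t := by
  cases t with
  | leaf v => rfl
  | introduce v t => exact Or.inl rfl
  | forget v t => exact Or.inl rfl
  | join t₁ t₂ => exact Or.inl rfl

/-- The index set of variables. -/
noncomputable def idxSet (T : NiceTree n) :
    Finset (Finset (Fin n) × Finset (Fin n)) :=
  (Bags T).biUnion (fun W => (cfg G W).image (fun K => (W, K)))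

lemma mem_idxSet {T : NiceTree n} {p : Finset (Fin n) × Finset (Fin n)} :
    p ∈ idxSet G T ↔ p.1 ∈ Bags T ∧ p.2 ∈ cfg G p.1 := by
  classical
  simp only [idxSet, Finset.mem_biUnion, Finset.mem_image]
  constructor
  · rintro ⟨W, hW, K, hK, rfl⟩
    exact ⟨hW, hK⟩
  · rintro ⟨h1, h2⟩
    exact ⟨p.1, h1, p.2, h2, rfl⟩

lemma card_idxSet_le {T : NiceTree n} {b : ℕ}
    (hb : ∀ W ∈ Bags T, (cfg G W).card ≤ b) :
    (idxSet G T).card ≤ T.size * b := by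
  classical
  calc (idxSet G T).card ≤ ∑ W ∈ Bags T, ((cfg G W).image (fun K => (W, K))).card :=
        Finset.card_biUnion_le
    _ ≤ ∑ W ∈ Bags T, b := Finset.sum_le_sum (fun W hW =>
        le_trans (Finset.card_image_le) (hb W hW))
    _ = (Bags T).card * b := by rw [Finset.sum_const, smul_eq_mul]
    _ ≤ T.size * b := Nat.mul_le_mul_right b (card_Bags_le T)

open Classical in
/-- The list of equality constraints (coefficient function, right-hand side). -/
noncomputable def conL : NiceTree n →
    List ((Finset (Fin n) × Finset (Fin n) → ℝ) × ℝ)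
  | .leaf v => [(fun p => if p.1 = {v} then (1 : ℝ) else 0, 1)]
  | .introduce v t =>
      ((fun p => if p.1 = insert v t.bag then (1 : ℝ) else 0, (1 : ℝ))
        :: (cfg G t.bag).toList.map (fun K =>
            (fun p => (if p.1 = insert v t.bag ∧ p.2 ∩ t.bag = K then (1 : ℝ) else 0)
              - (if p = (t.bag, K) then 1 else 0), 0)))
      ++ conL t
  | .forget v t =>
      ((fun p => if p.1 = t.bag.erase v then (1 : ℝ) else 0, (1 : ℝ))
        :: (cfg G (t.bag.erase v)).toList.map (fun K =>
            (fun p => (if p.1 = t.bag ∧ p.2 ∩ t.bag.erase v = K then (1 : ℝ) else 0)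
              - (if p = (t.bag.erase v, K) then 1 else 0), 0)))
      ++ conL t
  | .join t₁ t₂ => conL t₁ ++ conL t₂

lemma conL_length {T : NiceTree n} {τ : ℕ}
    (hbags : ∀ s : NiceTree n, s.isSubtree T → s.bag.card ≤ τ + 1) :
    (conL G T).length ≤ (1 + 2 ^ (τ + 1)) * T.size := by
  classical
  induction T with
  | leaf v => simp [conL, NiceTree.size]
  | introduce v t ih =>
      have hsub : ∀ s : NiceTree n, s.isSubtree t → s.bag.card ≤ τ + 1 :=
        fun s hs => hbags s (Or.inr hs)
      have hcard : (cfg G t.bag).card ≤ 2 ^ (τ + 1) :=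
        card_cfg_le G t.bag (hsub t (isSubtree_refl t))
      have hlen : (conL G (NiceTree.introduce v t)).length
          = 1 + (cfg G t.bag).toList.length + (conL G t).length := by
        simp [conL]
        omega
      rw [hlen, Finset.length_toList]
      have h2 := ih hsub
      simp only [NiceTree.size]
      nlinarith [Nat.one_le_two_pow (n := τ + 1)]
  | forget v t ih =>
      have hsub : ∀ s : NiceTree n, s.isSubtree t → s.bag.card ≤ τ + 1 :=
        fun s hs => hbags s (Or.inr hs)
      have hcard : (cfg G (t.bag.erase v)).card ≤ 2 ^ (τ + 1) := by
        apply card_cfg_le G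
        exact le_trans (Finset.card_le_card (Finset.erase_subset _ _))
          (hsub t (isSubtree_refl t))
      have hlen : (conL G (NiceTree.forget v t)).length
          = 1 + (cfg G (t.bag.erase v)).toList.length + (conL G t).length := by
        simp [conL]
        omega
      rw [hlen, Finset.length_toList]
      have h2 := ih hsub
      simp only [NiceTree.size]
      nlinarith [Nat.one_le_two_pow (n := τ + 1)]
  | join t₁ t₂ ih₁ ih₂ =>
      have h1 := ih₁ (fun s hs => hbags s (Or.inr (Or.inl hs)))
      have h2 := ih₂ (fun s hs => hbags s (Or.inr (Or.inr hs)))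
      have hlen : (conL G (NiceTree.join t₁ t₂)).length
          = (conL G t₁).length + (conL G t₂).length := by simp [conL]
      rw [hlen]
      simp only [NiceTree.size]
      nlinarith [Nat.one_le_two_pow (n := τ + 1)]

lemma eval_point {T : NiceTree n} (f : Finset (Fin n) → Finset (Fin n) → ℝ)
    (hfz : ∀ W K, ¬ (W ∈ Bags T ∧ K ∈ cfg G W) → f W K = 0)
    (W0 K0 : Finset (Fin n)) :
    ∑ p ∈ idxSet G T, (if p = (W0, K0) then (1 : ℝ) else 0) * f p.1 p.2
      = f W0 K0 := by
  classical
  have e : ∀ p ∈ idxSet G T, (if p = (W0, K0) then (1 : ℝ) else 0) * f p.1 p.2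
      = if p = (W0, K0) then f W0 K0 else 0 := by
    intro p _
    by_cases h : p = (W0, K0)
    · rw [if_pos h, if_pos h, one_mul, h]
    · rw [if_neg h, if_neg h, zero_mul]
  rw [Finset.sum_congr rfl e,
    Finset.sum_ite_eq' (idxSet G T) (W0, K0) (fun _ => f W0 K0)]
  by_cases h : (W0, K0) ∈ idxSet G T
  · rw [if_pos h]
  · rw [if_neg h]
    refine (hfz W0 K0 (fun hc => h ?_)).symm
    exact (mem_idxSet G).mpr hc

lemma eval_bag {T : NiceTree n} (f : Finset (Fin n) → Finset (Fin n) → ℝ)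
    {W0 : Finset (Fin n)} (hW0 : W0 ∈ Bags T)
    (q : Finset (Fin n) → Prop) [DecidablePred q] :
    ∑ p ∈ idxSet G T, (if p.1 = W0 ∧ q p.2 then (1 : ℝ) else 0) * f p.1 p.2
      = ∑ K ∈ (cfg G W0).filter q, f W0 K := by
  classical
  have e : ∀ p ∈ idxSet G T, (if p.1 = W0 ∧ q p.2 then (1 : ℝ) else 0) * f p.1 p.2
      = if p.1 = W0 ∧ q p.2 then f p.1 p.2 else 0 := by
    intro p _
    by_cases h : p.1 = W0 ∧ q p.2
    · rw [if_pos h, if_pos h, one_mul]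
    · rw [if_neg h, if_neg h, zero_mul]
  rw [Finset.sum_congr rfl e, ← Finset.sum_filter]
  have hset : (idxSet G T).filter (fun p => p.1 = W0 ∧ q p.2)
      = ((cfg G W0).filter q).image (fun K => (W0, K)) := by
    ext p
    simp only [Finset.mem_filter, Finset.mem_image, mem_idxSet]
    constructor
    · rintro ⟨⟨h1, h2⟩, h3, h4⟩
      exact ⟨p.2, ⟨h3 ▸ h2, h4⟩, by rw [← h3]⟩
    · rintro ⟨K, hK, rfl⟩
      exact ⟨⟨hW0, hK.1⟩, rfl, hK.2⟩
  rw [hset, Finset.sum_image (fun x _ y _ h => by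
    have := Prod.mk.injEq W0 x W0 y ▸ h
    exact (Prod.mk.inj h).2)]

lemma eval_bag' {T : NiceTree n} (f : Finset (Fin n) → Finset (Fin n) → ℝ)
    {W0 : Finset (Fin n)} (hW0 : W0 ∈ Bags T) :
    ∑ p ∈ idxSet G T, (if p.1 = W0 then (1 : ℝ) else 0) * f p.1 p.2
      = ∑ K ∈ cfg G W0, f W0 K := by
  classical
  have h := eval_bag G f hW0 (fun _ => True)
  simpa using h

lemma conL_sound {T : NiceTree n} (f : Finset (Fin n) → Finset (Fin n) → ℝ)
    (hfz : ∀ W K, ¬ (W ∈ Bags T ∧ K ∈ cfg G W) → f W K = 0)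
    (t : NiceTree n) (hBsub : ∀ W ∈ Bags t, W ∈ Bags T) :
    (∀ e ∈ conL G t, ∑ p ∈ idxSet G T, e.1 p * f p.1 p.2 = e.2) ↔ Cons G f t := by
  classical
  have rowEq : ∀ (W0 Wc : Finset (Fin n)), W0 ∈ Bags T → ∀ K : Finset (Fin n),
      ((∑ p ∈ idxSet G T, ((if p.1 = W0 ∧ p.2 ∩ Wc = K then (1 : ℝ) else 0)
          - (if p = (Wc, K) then 1 else 0)) * f p.1 p.2) = 0)
      ↔ (∑ K' ∈ (cfg G W0).filter (fun K' => K' ∩ Wc = K), f W0 K' = f Wc K) := by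
    intro W0 Wc hW0 K
    have e : ∀ p ∈ idxSet G T,
        ((if p.1 = W0 ∧ p.2 ∩ Wc = K then (1 : ℝ) else 0)
          - (if p = (Wc, K) then 1 else 0)) * f p.1 p.2
        = (if p.1 = W0 ∧ p.2 ∩ Wc = K then (1 : ℝ) else 0) * f p.1 p.2
          - (if p = (Wc, K) then (1 : ℝ) else 0) * f p.1 p.2 :=
      fun p _ => sub_mul _ _ _
    rw [Finset.sum_congr rfl e, Finset.sum_sub_distrib,
      eval_bag G f hW0 (fun K' => K' ∩ Wc = K), eval_point G f hfz Wc K,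
      sub_eq_zero]
  induction t with
  | leaf v =>
      have hW : ({v} : Finset (Fin n)) ∈ Bags T := hBsub _ (bag_mem_Bags (.leaf v))
      have hconL : conL G (.leaf v)
          = [(fun p => if p.1 = {v} then (1 : ℝ) else 0, 1)] := rfl
      rw [hconL, List.forall_mem_singleton]
      show _ ↔ (∑ K ∈ cfg G {v}, f {v} K = 1)
      rw [eval_bag' G f hW]
  | introduce v t ih =>
      have hchild : ∀ W ∈ Bags t, W ∈ Bags T := fun W hW => hBsub W (by
        simp only [Bags, Finset.mem_insert]; exact Or.inr hW)
      have hroot : insert v t.bag ∈ Bags T := hBsub _ (Finset.mem_insert_self _ _)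
      have hsplit : (∀ e ∈ conL G (.introduce v t),
          ∑ p ∈ idxSet G T, e.1 p * f p.1 p.2 = e.2)
          ↔ ((∑ p ∈ idxSet G T,
                (if p.1 = insert v t.bag then (1 : ℝ) else 0) * f p.1 p.2 = 1)
             ∧ (∀ K ∈ cfg G t.bag,
                (∑ p ∈ idxSet G T,
                  ((if p.1 = insert v t.bag ∧ p.2 ∩ t.bag = K then (1 : ℝ) else 0)
                    - (if p = (t.bag, K) then 1 else 0)) * f p.1 p.2) = 0)
             ∧ (∀ e ∈ conL G t, ∑ p ∈ idxSet G T, e.1 p * f p.1 p.2 = e.2)) := by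
        constructor
        · intro h
          refine ⟨h ((fun p => if p.1 = insert v t.bag then (1 : ℝ) else 0, (1 : ℝ))) ?_,
            fun K hK => h ((fun p =>
              (if p.1 = insert v t.bag ∧ p.2 ∩ t.bag = K then (1 : ℝ) else 0)
                - (if p = (t.bag, K) then 1 else 0), (0 : ℝ))) ?_, fun e he => h _ ?_⟩
          · simp only [conL, List.mem_append, List.mem_cons]
            exact Or.inl (Or.inl trivial)
          · simp only [conL, List.mem_append, List.mem_cons, List.mem_map,
              Finset.mem_toList]
            exact Or.inl (Or.inr ⟨K, hK, rfl⟩)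
          · simp only [conL, List.mem_append]
            exact Or.inr he
        · rintro ⟨h1, h2, h3⟩ e he
          simp only [conL, List.mem_append, List.mem_cons, List.mem_map,
            Finset.mem_toList] at he
          rcases he with (rfl | ⟨K, hK, rfl⟩) | he
          · exact h1
          · exact h2 K hK
          · exact h3 e he
      rw [hsplit]
      constructor
      · rintro ⟨h1, h2, h3⟩
        refine ⟨(ih hchild).mp h3, ?_, ?_⟩
        · rw [← eval_bag' G f hroot]; exact h1
        · intro K hK
          exact (rowEq (insert v t.bag) t.bag hroot K).mp (h2 K hK)
      · rintro ⟨h3, h1, h2⟩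
        refine ⟨?_, fun K hK => (rowEq (insert v t.bag) t.bag hroot K).mpr (h2 K hK),
          (ih hchild).mpr h3⟩
        rw [eval_bag' G f hroot]; exact h1
  | forget v t ih =>
      have hchild : ∀ W ∈ Bags t, W ∈ Bags T := fun W hW => hBsub W (by
        simp only [Bags, Finset.mem_insert]; exact Or.inr hW)
      have hroot : t.bag.erase v ∈ Bags T := hBsub _ (Finset.mem_insert_self _ _)
      have hbg : t.bag ∈ Bags T := hchild _ (bag_mem_Bags t)
      have hsplit : (∀ e ∈ conL G (.forget v t),
          ∑ p ∈ idxSet G T, e.1 p * f p.1 p.2 = e.2)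
          ↔ ((∑ p ∈ idxSet G T,
                (if p.1 = t.bag.erase v then (1 : ℝ) else 0) * f p.1 p.2 = 1)
             ∧ (∀ K ∈ cfg G (t.bag.erase v),
                (∑ p ∈ idxSet G T,
                  ((if p.1 = t.bag ∧ p.2 ∩ t.bag.erase v = K then (1 : ℝ) else 0)
                    - (if p = (t.bag.erase v, K) then 1 else 0)) * f p.1 p.2) = 0)
             ∧ (∀ e ∈ conL G t, ∑ p ∈ idxSet G T, e.1 p * f p.1 p.2 = e.2)) := by
        constructor
        · intro h
          refine ⟨h ((fun p => if p.1 = t.bag.erase v then (1 : ℝ) else 0, (1 : ℝ))) ?_,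
            fun K hK => h ((fun p =>
              (if p.1 = t.bag ∧ p.2 ∩ t.bag.erase v = K then (1 : ℝ) else 0)
                - (if p = (t.bag.erase v, K) then 1 else 0), (0 : ℝ))) ?_,
              fun e he => h _ ?_⟩
          · simp only [conL, List.mem_append, List.mem_cons]
            exact Or.inl (Or.inl trivial)
          · simp only [conL, List.mem_append, List.mem_cons, List.mem_map,
              Finset.mem_toList]
            exact Or.inl (Or.inr ⟨K, hK, rfl⟩)
          · simp only [conL, List.mem_append]
            exact Or.inr he
        · rintro ⟨h1, h2, h3⟩ e he
          simp only [conL, List.mem_append, List.mem_cons, List.mem_map,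
            Finset.mem_toList] at he
          rcases he with (rfl | ⟨K, hK, rfl⟩) | he
          · exact h1
          · exact h2 K hK
          · exact h3 e he
      rw [hsplit]
      constructor
      · rintro ⟨h1, h2, h3⟩
        refine ⟨(ih hchild).mp h3, ?_, ?_⟩
        · rw [← eval_bag' G f hroot]; exact h1
        · intro K hK
          exact (rowEq t.bag (t.bag.erase v) hbg K).mp (h2 K hK)
      · rintro ⟨h3, h1, h2⟩
        refine ⟨?_, fun K hK => (rowEq t.bag (t.bag.erase v) hbg K).mpr (h2 K hK),
          (ih hchild).mpr h3⟩
        rw [eval_bag' G f hroot]; exact h1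
  | join t₁ t₂ ih₁ ih₂ =>
      have h₁ : ∀ W ∈ Bags t₁, W ∈ Bags T := fun W hW => hBsub W (by
        simp only [Bags, Finset.mem_union]; exact Or.inl hW)
      have h₂ : ∀ W ∈ Bags t₂, W ∈ Bags T := fun W hW => hBsub W (by
        simp only [Bags, Finset.mem_union]; exact Or.inr hW)
      have hconL : conL G (.join t₁ t₂) = conL G t₁ ++ conL G t₂ := rfl
      rw [hconL, List.forall_mem_append]
      exact and_congr (ih₁ h₁) (ih₂ h₂)

lemma main (T : NiceTree n) (τ : ℕ)
    (hdec : IsNiceTreeDecompGraph G T)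
    (hbags : ∀ s : NiceTree n, s.isSubtree T → s.bag.card ≤ τ + 1) :
    ∃ (m p q : ℕ) (A : Matrix (Fin p) (Fin m) ℝ) (bvec : Fin p → ℝ)
      (Cmat : Matrix (Fin q) (Fin m) ℝ) (dvec : Fin q → ℝ)
      (π : (Fin m → ℝ) →ₗ[ℝ] (Fin n → ℝ)),
      m ≤ 4 * 2 ^ (τ + 1) * T.size ∧ p + q ≤ 4 * 2 ^ (τ + 1) * T.size ∧
      π '' {x | A.mulVec x ≤ bvec ∧ Cmat.mulVec x = dvec}
        = convexHull ℝ {x : Fin n → ℝ | ∃ S : Finset (Fin n),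
            (∀ u ∈ S, ∀ v ∈ S, ¬ G.Adj u v) ∧
            x = fun v => if v ∈ S then (1 : ℝ) else 0} := by
  classical
  have hcfg_bound : ∀ W ∈ Bags T, (cfg G W).card ≤ 2 ^ (τ + 1) := by
    intro W hW
    obtain ⟨s, hs, rfl⟩ := exists_subtree_of_mem_Bags hW
    exact card_cfg_le G _ (hbags s hs)
  have hBvex : ∀ v : Fin n, ∃ W, W ∈ Bags T ∧ v ∈ W := by
    intro v
    obtain ⟨W, hW, hvW⟩ := exists_bag_of_mem_verts (hdec.2.1 v)
    exact ⟨W, hW, hvW⟩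
  choose Bv hBv1 hBv2 using hBvex
  set ι := idxSet G T with hιdef
  set eqv := ι.equivFin with heqv
  set Φ : (Fin ι.card → ℝ) → (Finset (Fin n) → Finset (Fin n) → ℝ) :=
    fun x W K => if h : (W, K) ∈ ι then x (eqv ⟨(W, K), h⟩) else 0 with hΦdef
  have hΦp : ∀ (x : Fin ι.card → ℝ) (p : Finset (Fin n) × Finset (Fin n))
      (hp : p ∈ ι), Φ x p.1 p.2 = x (eqv ⟨p, hp⟩) := by
    intro x p hp
    obtain ⟨W, K⟩ := p
    simp only [hΦdef]
    rw [dif_pos hp]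
  have hx : ∀ (x : Fin ι.card → ℝ) (j : Fin ι.card),
      x j = Φ x (eqv.symm j).1.1 (eqv.symm j).1.2 := by
    intro x j
    rw [hΦp x (eqv.symm j).1 (eqv.symm j).2]
    have h1 : (⟨(eqv.symm j).1, (eqv.symm j).2⟩ : {p // p ∈ ι}) = eqv.symm j := rfl
    rw [h1, Equiv.apply_symm_apply]
  have hfz : ∀ (x : Fin ι.card → ℝ) (W K : Finset (Fin n)),
      ¬ (W ∈ Bags T ∧ K ∈ cfg G W) → Φ x W K = 0 := by
    intro x W K h
    simp only [hΦdef]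
    rw [dif_neg (fun hc => h ((mem_idxSet G).mp hc))]
  have hΦ0 : ∀ x : Fin ι.card → ℝ,
      (∀ j, 0 ≤ x j) ↔ (∀ W K, 0 ≤ Φ x W K) := by
    intro x
    constructor
    · intro h W K
      simp only [hΦdef]
      split
      · exact h _
      · exact le_refl 0
    · intro h j
      rw [hx x j]
      exact h _ _
  have hsum : ∀ F : Finset (Fin n) × Finset (Fin n) → ℝ,
      (∑ j : Fin ι.card, F (eqv.symm j).1) = ∑ p ∈ ι, F p := by
    intro F
    calc ∑ j : Fin ι.card, F (eqv.symm j).1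
        = ∑ p : {p // p ∈ ι}, F p.1 := Equiv.sum_comp eqv.symm (fun p => F p.1)
      _ = ∑ p ∈ ι, F p := Finset.sum_coe_sort ι F
  set Pmat : Matrix (Fin n) (Fin ι.card) ℝ :=
    fun v j => if (eqv.symm j).1.1 = Bv v ∧ v ∈ (eqv.symm j).1.2 then 1 else 0
    with hPdef
  set Cmat : Matrix (Fin (conL G T).length) (Fin ι.card) ℝ :=
    fun i j => ((conL G T).get i).1 (eqv.symm j).1 with hCdef
  have hπ : ∀ (x : Fin ι.card → ℝ) (v : Fin n), Pmat.mulVecLin x v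
      = ∑ K ∈ (cfg G (Bv v)).filter (fun K => v ∈ K), Φ x (Bv v) K := by
    intro x v
    have h1 : Pmat.mulVecLin x v = ∑ j, Pmat v j * x j := by
      simp [Matrix.mulVecLin_apply, Matrix.mulVec, dotProduct]
    rw [h1]
    have h2 : ∀ j : Fin ι.card, Pmat v j * x j
        = (if (eqv.symm j).1.1 = Bv v ∧ v ∈ (eqv.symm j).1.2 then (1 : ℝ) else 0)
          * Φ x (eqv.symm j).1.1 (eqv.symm j).1.2 := by
      intro j
      rw [← hx x j, hPdef]
    rw [Finset.sum_congr rfl (fun j _ => h2 j),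
      hsum (fun p => (if p.1 = Bv v ∧ v ∈ p.2 then (1 : ℝ) else 0) * Φ x p.1 p.2)]
    exact eval_bag G (Φ x) (hBv1 v) (fun K => v ∈ K)
  have hC : ∀ x : Fin ι.card → ℝ,
      (Cmat.mulVec x = (fun i => ((conL G T).get i).2))
        ↔ ∀ e ∈ conL G T, ∑ p ∈ ι, e.1 p * Φ x p.1 p.2 = e.2 := by
    intro x
    have hrow : ∀ i, Cmat.mulVec x i
        = ∑ p ∈ ι, ((conL G T).get i).1 p * Φ x p.1 p.2 := by
      intro i
      have h1 : Cmat.mulVec x i = ∑ j, Cmat i j * x j := by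
        simp [Matrix.mulVec, dotProduct]
      rw [h1]
      have h2 : ∀ j, Cmat i j * x j
          = ((conL G T).get i).1 (eqv.symm j).1
            * Φ x (eqv.symm j).1.1 (eqv.symm j).1.2 := by
        intro j
        rw [← hx x j, hCdef]
      rw [Finset.sum_congr rfl (fun j _ => h2 j),
        hsum (fun p => ((conL G T).get i).1 p * Φ x p.1 p.2)]
    constructor
    · intro h e he
      obtain ⟨i, hi⟩ := List.mem_iff_get.mp he
      rw [← hi, ← hrow i]
      exact congrFun h i
    · intro h
      funext i
      rw [hrow i]
      exact h _ (List.get_mem (conL G T) i)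
  have hA : ∀ x : Fin ι.card → ℝ,
      ((-(1 : Matrix (Fin ι.card) (Fin ι.card) ℝ)).mulVec x ≤ 0 ↔ ∀ j, 0 ≤ x j) := by
    intro x
    rw [Matrix.neg_mulVec, Matrix.one_mulVec, neg_nonpos]
    rfl
  refine ⟨ι.card, ι.card, (conL G T).length,
    -(1 : Matrix (Fin ι.card) (Fin ι.card) ℝ), 0, Cmat,
    (fun i => ((conL G T).get i).2), Pmat.mulVecLin, ?_, ?_, ?_⟩
  · calc ι.card ≤ T.size * 2 ^ (τ + 1) := card_idxSet_le G hcfg_bound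
      _ = 2 ^ (τ + 1) * T.size := Nat.mul_comm _ _
      _ ≤ 4 * (2 ^ (τ + 1) * T.size) :=
          Nat.le_mul_of_pos_left _ (by norm_num)
      _ = 4 * 2 ^ (τ + 1) * T.size := (Nat.mul_assoc _ _ _).symm
  · have h1 : ι.card ≤ T.size * 2 ^ (τ + 1) := card_idxSet_le G hcfg_bound
    have h2 : (conL G T).length ≤ (1 + 2 ^ (τ + 1)) * T.size := conL_length G hbags
    have h1' : ι.card ≤ 2 ^ (τ + 1) * T.size :=
      h1.trans (le_of_eq (Nat.mul_comm _ _))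
    have h2' : (conL G T).length ≤ T.size + 2 ^ (τ + 1) * T.size :=
      h2.trans (le_of_eq (by ring))
    have h5 : T.size ≤ 2 ^ (τ + 1) * T.size :=
      Nat.le_mul_of_pos_left _ (pow_pos (by norm_num) (τ + 1))
    calc ι.card + (conL G T).length
        ≤ 2 ^ (τ + 1) * T.size + (T.size + 2 ^ (τ + 1) * T.size) :=
          Nat.add_le_add h1' h2'
      _ ≤ 2 ^ (τ + 1) * T.size + (2 ^ (τ + 1) * T.size + 2 ^ (τ + 1) * T.size) :=
          Nat.add_le_add_left (Nat.add_le_add_right h5 _) _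
      _ = 3 * (2 ^ (τ + 1) * T.size) := by ring
      _ ≤ 4 * (2 ^ (τ + 1) * T.size) := Nat.mul_le_mul_right _ (by norm_num)
      _ = 4 * 2 ^ (τ + 1) * T.size := (Nat.mul_assoc _ _ _).symm
  · apply Set.Subset.antisymm
    · -- image ⊆ hull
      rintro y ⟨x, ⟨hxA, hxC⟩, rfl⟩
      have h0f : ∀ W K, 0 ≤ Φ x W K := (hΦ0 x).mp ((hA x).mp hxA)
      have hCons : Cons G (Φ x) T :=
        (conL_sound G (Φ x) (hfz x) T (fun W hW => hW)).mp ((hC x).mp hxC)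
      have hZero : ZeroOut G T (Φ x) := fun W hW K hK =>
        hfz x W K (fun hc => hK hc.2)
      obtain ⟨w, hd⟩ := decomp G T (Φ x) h0f hdec.1 hCons hZero
      set s := T.verts.powerset.filter (fun S => w S ≠ 0) with hsdef
      have hsum1 : ∑ S ∈ s, w S = 1 := by
        rw [hsdef, Finset.sum_filter_ne_zero]
        exact hd.total
      have hindep : ∀ S ∈ s, ∀ u ∈ S, ∀ v' ∈ S, ¬ G.Adj u v' := by
        intro S hS u hu v' hv' hadj
        obtain ⟨st, hst, hu', hv''⟩ := hdec.2.2 u v' hadj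
        have hWB : st.bag ∈ Bags T := bag_mem_Bags_of_isSubtree hst
        have hK : S ∩ st.bag ∉ cfg G st.bag := by
          rw [mem_cfg]
          rintro ⟨-, hp⟩
          exact hp u (Finset.mem_inter.mpr ⟨hu, hu'⟩)
            v' (Finset.mem_inter.mpr ⟨hv', hv''⟩) hadj
        have hw0 := hd.w_zero G hZero hWB
          (Finset.mem_powerset.mp (Finset.mem_filter.mp hS).1) hK
        exact (Finset.mem_filter.mp hS).2 hw0
      have hy : Pmat.mulVecLin x
          = ∑ S ∈ s, w S • (fun v => if v ∈ S then (1 : ℝ) else 0) := by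
        funext v
        rw [hπ x v]
        have e1 : ∀ K ∈ (cfg G (Bv v)).filter (fun K => v ∈ K),
            Φ x (Bv v) K = ∑ S ∈ T.verts.powerset.filter
              (fun S => S ∩ Bv v = K), w S :=
          fun K _ => hd.marg (Bv v) (hBv1 v) K
        rw [Finset.sum_congr rfl e1,
          sum_fiber_filter T.verts.powerset ((cfg G (Bv v)).filter (fun K => v ∈ K))
            (fun S => S ∩ Bv v) w]
        have e2 : ∑ S ∈ T.verts.powerset.filter
            (fun S => S ∩ Bv v ∈ (cfg G (Bv v)).filter (fun K => v ∈ K)), w S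
            = ∑ S ∈ T.verts.powerset.filter (fun S => v ∈ S), w S := by
          apply Finset.sum_subset
          · intro S hS
            simp only [Finset.mem_filter] at hS ⊢
            exact ⟨hS.1, (Finset.mem_inter.mp hS.2.2).1⟩
          · intro S hS hS2
            simp only [Finset.mem_filter] at hS hS2
            apply hd.w_zero G hZero (hBv1 v) (Finset.mem_powerset.mp hS.1)
            intro hmem
            exact hS2 ⟨hS.1, hmem, Finset.mem_inter.mpr ⟨hS.2, hBv2 v⟩⟩
        rw [e2]
        have e3 : (∑ S ∈ s, w S • (fun v' => if v' ∈ S then (1 : ℝ) else 0)) v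
            = ∑ S ∈ s, (if v ∈ S then w S else 0) := by
          rw [Finset.sum_apply]
          apply Finset.sum_congr rfl
          intro S _
          simp only [Pi.smul_apply, smul_eq_mul]
          by_cases h : v ∈ S
          · rw [if_pos h, if_pos h, mul_one]
          · rw [if_neg h, if_neg h, mul_zero]
        rw [e3, ← Finset.sum_filter]
        symm
        apply Finset.sum_subset
        · intro S hS
          simp only [hsdef, Finset.mem_filter] at hS ⊢
          exact ⟨hS.1.1, hS.2⟩
        · intro S hS hS2
          simp only [hsdef, Finset.mem_filter] at hS hS2
          by_contra hne
          exact hS2 ⟨⟨hS.1, fun h => hne (h ▸ rfl)⟩, hS.2⟩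
      rw [hy, ← Finset.centerMass_eq_of_sum_1 _ _ hsum1]
      apply Finset.centerMass_mem_convexHull s (fun S hS => hd.nonneg S)
        (by rw [hsum1]; norm_num)
      intro S hS
      exact ⟨S, hindep S hS, rfl⟩
    · -- hull ⊆ image
      apply convexHull_min
      · rintro y' ⟨S, hSind, rfl⟩
        set x : Fin ι.card → ℝ :=
          fun j => if (eqv.symm j).1.2 = S ∩ (eqv.symm j).1.1 then 1 else 0 with hxdef
        have hfeq : ∀ W ∈ Bags T, ∀ K,
            Φ x W K = (if K = S ∩ W then (1 : ℝ) else 0) := by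
          intro W hW K
          by_cases h : (W, K) ∈ ι
          · rw [hΦp x (W, K) h, hxdef]
            simp only [Equiv.symm_apply_apply]
          · rw [hfz x W K (fun hc => h ((mem_idxSet G).mpr hc))]
            by_cases h2 : K = S ∩ W
            · exfalso
              apply h
              rw [mem_idxSet]
              exact ⟨hW, h2 ▸ inter_mem_cfg G hSind⟩
            · rw [if_neg h2]
        have hCons : Cons G (Φ x) T :=
          Cons_congr G T hfeq (integral_cons G S hSind T)
        refine ⟨x, ⟨?_, ?_⟩, ?_⟩
        · apply (hA x).mpr
          intro j
          rw [hxdef]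
          dsimp only
          split
          · norm_num
          · exact le_refl 0
        · exact (hC x).mpr
            ((conL_sound G (Φ x) (hfz x) T (fun W hW => hW)).mpr hCons)
        · funext v
          rw [hπ x v]
          have e1 : ∀ K ∈ (cfg G (Bv v)).filter (fun K => v ∈ K),
              Φ x (Bv v) K = if K = S ∩ Bv v then (1 : ℝ) else 0 :=
            fun K _ => hfeq (Bv v) (hBv1 v) K
          rw [Finset.sum_congr rfl e1,
            Finset.sum_ite_eq' _ (S ∩ Bv v) (fun _ => (1 : ℝ))]
          by_cases h : v ∈ S
          · rw [if_pos, if_pos h]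
            exact Finset.mem_filter.mpr ⟨inter_mem_cfg G hSind,
              Finset.mem_inter.mpr ⟨h, hBv2 v⟩⟩
          · rw [if_neg, if_neg h]
            intro hmem
            exact h (Finset.mem_inter.mp (Finset.mem_filter.mp hmem).2).1
      · apply Convex.linear_image
        intro u hu v' hv' a b ha hb hab
        constructor
        · rw [Matrix.mulVec_add, Matrix.mulVec_smul, Matrix.mulVec_smul]
          calc a • (-(1 : Matrix (Fin ι.card) (Fin ι.card) ℝ)).mulVec u
                + b • (-(1 : Matrix (Fin ι.card) (Fin ι.card) ℝ)).mulVec v'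
              ≤ a • (0 : Fin ι.card → ℝ) + b • (0 : Fin ι.card → ℝ) :=
                add_le_add (smul_le_smul_of_nonneg_left hu.1 ha)
                  (smul_le_smul_of_nonneg_left hv'.1 hb)
            _ = 0 := by simp
        · rw [Matrix.mulVec_add, Matrix.mulVec_smul, Matrix.mulVec_smul,
            hu.2, hv'.2, ← add_smul, hab, one_smul]


end ISEF

/-- Extended formulation of size `O(2^(τ+1)·N)` for the
independent set polytope of a graph of treewidth `τ`. -/
theorem independent_set_extended_formulation :
    ∃ c : ℕ, 0 < c ∧
      ∀ (n : ℕ) (G : SimpleGraph (Fin n)) (T : NiceTree n) (τ : ℕ),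
        IsNiceTreeDecompGraph G T →
        (∀ s : NiceTree n, s.isSubtree T → s.bag.card ≤ τ + 1) →
        ∃ (m p q : ℕ) (A : Matrix (Fin p) (Fin m) ℝ) (bvec : Fin p → ℝ)
          (Cmat : Matrix (Fin q) (Fin m) ℝ) (dvec : Fin q → ℝ)
          (π : (Fin m → ℝ) →ₗ[ℝ] (Fin n → ℝ)),
          m ≤ c * 2 ^ (τ + 1) * T.size ∧ p + q ≤ c * 2 ^ (τ + 1) * T.size ∧
          π '' {x | A.mulVec x ≤ bvec ∧ Cmat.mulVec x = dvec}
            = convexHull ℝ {x : Fin n → ℝ | ∃ S : Finset (Fin n),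
                (∀ u ∈ S, ∀ v ∈ S, ¬ G.Adj u v) ∧
                x = fun v => if v ∈ S then (1 : ℝ) else 0} := by
  refine ⟨4, by norm_num, ?_⟩
  intro n G T τ hdec hbags
  exact ISEF.main G T τ hdec hbags
end
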